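/- arXiv:1511.00774 — 6 statements merged into one kernel-verified Lean document; each statement's English description precedes it below -/
import Mathlib

section
/- For all real x and all real y > 0, with z = x + iy, the complex error function admits the integral representation w(z) = (1/√π) ∫₀^{∞} e^{−t²/4} e^{−yt} e^{ixt} dt. -/
open Real MeasureTheory Set Filter Complex

lemma norm_exp_neg_sq_le (u : ℝ) (c : ℂ) {K : ℝ} (hK : ‖c‖ ≤ K) :
    ‖Complex.exp (-((u:ℂ)+c)^2)‖ ≤ Real.exp (K^2) * Real.exp (-(1/2)*u^2) := by
  rw [Complex.norm_exp, ← Real.exp_add]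
  apply Real.exp_le_exp.mpr
  have h1 : c.re^2 + c.im^2 ≤ K^2 := by
    have := Complex.sq_norm c
    rw [Complex.normSq_apply] at this
    have h2 : ‖c‖ ≤ K := hK
    nlinarith [norm_nonneg c]
  have hre : (-((u:ℂ)+c)^2).re = -((u + c.re)^2) + c.im^2 := by
    simp [Complex.add_re, Complex.add_im, pow_two]
    ring
  rw [hre]
  nlinarith [sq_nonneg (u + 2*c.re)]

lemma integrableOn_bound (K C : ℝ) :
    IntegrableOn (fun u : ℝ => (|u| + K) * (C * Real.exp (-(1/2)*u^2))) (Set.Ioi 0) := by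
  have base : IntegrableOn (fun u:ℝ => u * Real.exp (-(1/2)*u^2)) (Set.Ioi 0) := by
    simpa [Real.rpow_one] using
      integrableOn_rpow_mul_exp_neg_mul_sq (by norm_num : (0:ℝ) < 1/2) (by norm_num : (-1:ℝ) < 1)
  have base2 : IntegrableOn (fun u:ℝ => Real.exp (-(1/2)*u^2)) (Set.Ioi 0) :=
    (integrable_exp_neg_mul_sq (by norm_num : (0:ℝ) < 1/2)).integrableOn
  have h : IntegrableOn (fun u:ℝ => C * (u * Real.exp (-(1/2)*u^2)) + (K*C) * Real.exp (-(1/2)*u^2)) (Set.Ioi 0) :=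
    (base.const_mul C).add (base2.const_mul (K*C))
  apply h.congr_fun ?_ measurableSet_Ioi
  intro u hu
  simp only []
  rw [abs_of_pos (mem_Ioi.mp hu)]
  ring

lemma contAux (c : ℂ) : Continuous (fun u : ℝ => Complex.exp (-((u:ℂ)+c)^2)) := by
  fun_prop

lemma intOn1 (c : ℂ) : IntegrableOn (fun u : ℝ => Complex.exp (-((u:ℂ)+c)^2)) (Set.Ioi 0) := by
  apply Integrable.mono'
    (((integrable_exp_neg_mul_sq (by norm_num : (0:ℝ) < 1/2)).const_mul (Real.exp (‖c‖^2))).integrableOn)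
  · exact (contAux c).aestronglyMeasurable
  · filter_upwards [ae_restrict_mem measurableSet_Ioi] with u _
    exact norm_exp_neg_sq_le u c le_rfl

lemma intOn2 (c : ℂ) :
    IntegrableOn (fun u : ℝ => ((u:ℂ)+c) * Complex.exp (-((u:ℂ)+c)^2)) (Set.Ioi 0) := by
  apply Integrable.mono' (integrableOn_bound ‖c‖ (Real.exp (‖c‖^2)))
  · exact ((continuous_ofReal.add continuous_const).mul (contAux c)).aestronglyMeasurable
  · filter_upwards [ae_restrict_mem measurableSet_Ioi] with u _
    rw [norm_mul]
    have h1 : ‖(u:ℂ)+c‖ ≤ |u| + ‖c‖ := by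
      simpa using norm_add_le (u:ℂ) c
    exact mul_le_mul h1 (norm_exp_neg_sq_le u c le_rfl) (norm_nonneg _) (by positivity)

lemma hderivC (c : ℂ) (w : ℂ) :
    HasDerivAt (fun w : ℂ => Complex.exp (-(w+c)^2))
      (-2*(w+c)*Complex.exp (-(w+c)^2)) w := by
  have h : HasDerivAt (fun w : ℂ => -(w+c)^2) (-(2*(w+c))) w := by
    exact ((((hasDerivAt_id w).add_const c).pow 2).neg).congr_deriv (by simp)
  have := h.cexp
  exact this.congr_deriv (by ring)

lemma tendsto0 (c : ℂ) :
    Tendsto (fun u : ℝ => Complex.exp (-((u:ℂ)+c)^2)) atTop (nhds 0) := by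
  apply squeeze_zero_norm (fun u => norm_exp_neg_sq_le u c le_rfl)
  rw [← mul_zero (Real.exp (‖c‖^2))]
  apply Tendsto.const_mul
  apply Real.tendsto_exp_atBot.comp
  have h : Tendsto (fun u : ℝ => u^2) atTop atTop := tendsto_pow_atTop two_ne_zero
  have := h.const_mul_atTop (by norm_num : (0:ℝ) < 1/2)
  simpa using (tendsto_neg_atBot_iff.mpr this)

lemma step1 (c : ℂ) :
    ∫ u in Set.Ioi (0:ℝ), (-2*((u:ℂ)+c)*Complex.exp (-((u:ℂ)+c)^2)) = -Complex.exp (-c^2) := by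
  have h := integral_Ioi_of_hasDerivAt_of_tendsto'
    (f := fun u:ℝ => Complex.exp (-((u:ℂ)+c)^2))
    (f' := fun u:ℝ => -2*((u:ℂ)+c)*Complex.exp (-((u:ℂ)+c)^2))
    (a := 0) (m := 0)
    (fun u _ => (hderivC c u).comp_ofReal)
    (IntegrableOn.congr_fun ((intOn2 c).const_mul (-2) : IntegrableOn _ _ _) (fun u _ => by ring) measurableSet_Ioi)
    (tendsto0 c)
  simpa using h

lemma hderivParam (c : ℂ) (u : ℝ) (x : ℝ) :
    HasDerivAt (fun x : ℝ => Complex.exp (-((u:ℂ) + (x:ℂ)*c)^2))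
      (c * (-2*((u:ℂ)+(x:ℂ)*c)*Complex.exp (-((u:ℂ)+(x:ℂ)*c)^2))) x := by
  have inner : HasDerivAt (fun w : ℂ => -((u:ℂ) + w*c)^2) (-(2*((u:ℂ)+(x:ℂ)*c)*c)) (x:ℂ) := by
    exact ((((hasDerivAt_id (x:ℂ)).mul_const c).const_add (u:ℂ)).pow 2).neg.congr_deriv (by simp)
  have := (inner.cexp).comp_ofReal
  convert this using 1
  ring

lemma key (c : ℂ) :
    (∫ u in Set.Ioi (0:ℝ), Complex.exp (-((u:ℂ) + c)^2)) =
      ((Real.sqrt Real.pi : ℂ))/2 - c * ∫ s in (0:ℝ)..1, Complex.exp (-((s:ℂ)*c)^2) := by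
  have contf : Continuous (fun t : ℝ => Complex.exp (-((t:ℂ)*c)^2)) := by fun_prop
  set Φ : ℝ → ℂ := fun r =>
    (∫ u in Set.Ioi (0:ℝ), Complex.exp (-((u:ℂ) + (r:ℂ)*c)^2)) +
      c * ∫ t in (0:ℝ)..r, Complex.exp (-((t:ℂ)*c)^2) with hΦ
  have hd : ∀ r : ℝ, HasDerivAt Φ 0 r := by
    intro r
    set K := (|r|+1) * ‖c‖ with hK
    have h1 : HasDerivAt (fun r : ℝ => ∫ u in Set.Ioi (0:ℝ), Complex.exp (-((u:ℂ) + (r:ℂ)*c)^2))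
        (∫ u in Set.Ioi (0:ℝ), c * (-2*((u:ℂ)+(r:ℂ)*c)*Complex.exp (-((u:ℂ)+(r:ℂ)*c)^2))) r := by
      have main := hasDerivAt_integral_of_dominated_loc_of_deriv_le
        (μ := volume.restrict (Set.Ioi 0)) (x₀ := r)
        (F := fun (r : ℝ) (u:ℝ) => Complex.exp (-((u:ℂ) + (r:ℂ)*c)^2))
        (F' := fun (r : ℝ) (u:ℝ) => c * (-2*((u:ℂ)+(r:ℂ)*c)*Complex.exp (-((u:ℂ)+(r:ℂ)*c)^2)))
        (bound := fun u => 2*‖c‖*((|u| + K) * (Real.exp (K^2) * Real.exp (-(1/2)*u^2))))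
        (Metric.ball_mem_nhds r one_pos)
        (Eventually.of_forall (fun x => Continuous.aestronglyMeasurable (by fun_prop)))
        (intOn1 ((r:ℂ)*c))
        (Continuous.aestronglyMeasurable (by fun_prop))
        ?_ ((integrableOn_bound K (Real.exp (K^2))).const_mul (2*‖c‖))
        (Eventually.of_forall (fun u => fun x _ => hderivParam c u x))
      · exact main.2
      · apply Eventually.of_forall
        intro u x hx
        have hxr : |x| ≤ |r| + 1 := by
          have h := abs_sub_abs_le_abs_sub x r
          have := mem_ball_iff_norm.mp hx
          rw [Real.norm_eq_abs] at this
          linarith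
        have hxc : ‖(x:ℂ)*c‖ ≤ K := by
          rw [norm_mul, Complex.norm_real, Real.norm_eq_abs, hK]
          exact mul_le_mul_of_nonneg_right hxr (norm_nonneg c)
        have hw : ‖(u:ℂ) + (x:ℂ)*c‖ ≤ |u| + K := by
          refine (norm_add_le _ _).trans ?_
          rw [Complex.norm_real, Real.norm_eq_abs]
          exact add_le_add_right hxc _
        have he := norm_exp_neg_sq_le u ((x:ℂ)*c) hxc
        calc ‖c * (-2*((u:ℂ)+(x:ℂ)*c)*Complex.exp (-((u:ℂ)+(x:ℂ)*c)^2))‖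
            = 2 * ‖c‖ * (‖(u:ℂ)+(x:ℂ)*c‖ * ‖Complex.exp (-((u:ℂ)+(x:ℂ)*c)^2)‖) := by
              simp [norm_mul]; ring
          _ ≤ 2*‖c‖*((|u| + K) * (Real.exp (K^2) * Real.exp (-(1/2)*u^2))) := by
              gcongr
    have h1' : HasDerivAt (fun r : ℝ => ∫ u in Set.Ioi (0:ℝ), Complex.exp (-((u:ℂ) + (r:ℂ)*c)^2))
        (c * -Complex.exp (-((r:ℂ)*c)^2)) r := by
      convert h1 using 1
      rw [MeasureTheory.integral_const_mul, step1 ((r:ℂ)*c)]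
    have h2 : HasDerivAt (fun r : ℝ => ∫ t in (0:ℝ)..r, Complex.exp (-((t:ℂ)*c)^2))
        (Complex.exp (-((r:ℂ)*c)^2)) r := by
      exact intervalIntegral.integral_hasDerivAt_right
        (contf.intervalIntegrable _ _)
        (contf.stronglyMeasurableAtFilter _ _)
        contf.continuousAt
    have := h1'.add (h2.const_mul c)
    exact this.congr_deriv (by ring)
  have hconst : Φ 1 = Φ 0 :=
    is_const_of_deriv_eq_zero (fun r => (hd r).differentiableAt) (fun r => (hd r).deriv) 1 0
  have hΦ0 : Φ 0 = ((Real.sqrt Real.pi : ℂ))/2 := by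
    rw [hΦ]
    simp only [Complex.ofReal_zero, zero_mul, add_zero, intervalIntegral.integral_same, mul_zero]
    have := integral_gaussian_complex_Ioi (b := 1) (by norm_num)
    simp only [neg_mul, one_mul, div_one] at this
    rw [this]
    have h : ((Real.sqrt Real.pi : ℝ) : ℂ) = (Real.pi : ℂ) ^ (1/2 : ℂ) := by
      rw [Real.sqrt_eq_rpow, Complex.ofReal_cpow Real.pi_pos.le]
      norm_num
    rw [h]
  have hΦ1 : Φ 1 = (∫ u in Set.Ioi (0:ℝ), Complex.exp (-((u:ℂ) + c)^2)) +
      c * ∫ s in (0:ℝ)..1, Complex.exp (-((s:ℂ)*c)^2) := by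
    rw [hΦ]; norm_num
  rw [hΦ1, hΦ0] at hconst
  linear_combination hconst

/-- The complex error function (Faddeeva function):
`w(z) = e^{−z²}(1 + (2i/√π)∫₀^z e^{t²} dt)`, the integral taken along the
straight-line segment from `0` to `z`. -/
noncomputable def faddeeva (z : ℂ) : ℂ :=
  Complex.exp (-z ^ 2) *
    (1 + (2 * Complex.I / (Real.sqrt Real.pi : ℂ)) *
      (z * ∫ s in (0:ℝ)..1, Complex.exp (((s : ℂ) * z) ^ 2)))

/-- For all real `x` and real `y > 0`, with `z = x + iy`,
`w(z) = (1/√π) ∫₀^{∞} e^{−t²/4} e^{−yt} e^{ixt} dt`. -/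
theorem faddeeva_integral_rep (x y : ℝ) (hy : 0 < y) :
    faddeeva ((x : ℂ) + Complex.I * (y : ℂ)) =
      (1 / (Real.sqrt Real.pi : ℂ)) *
        ∫ t in Set.Ioi (0:ℝ),
          Complex.exp (-(t : ℂ) ^ 2 / 4) * Complex.exp (-(y : ℂ) * (t : ℂ)) *
            Complex.exp (Complex.I * (x : ℂ) * (t : ℂ)) := by
  set z : ℂ := (x : ℂ) + Complex.I * (y : ℂ) with hz
  set c : ℂ := -Complex.I * z with hc
  set f : ℝ → ℂ := fun u => Complex.exp (-((u:ℂ) + c)^2) with hf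
  have hint : ∀ t : ℝ,
      Complex.exp (-(t : ℂ) ^ 2 / 4) * Complex.exp (-(y : ℂ) * (t : ℂ)) *
        Complex.exp (Complex.I * (x : ℂ) * (t : ℂ)) =
      Complex.exp (-z^2) * f ((1/2)*t) := by
    intro t
    rw [hf]
    simp only []
    rw [← Complex.exp_add, ← Complex.exp_add, ← Complex.exp_add]
    congr 1
    push_cast
    rw [hc, hz]
    linear_combination ((x:ℂ)^2 - (y:ℂ)*(t:ℂ) + 2*Complex.I*(x:ℂ)*(y:ℂ) + Complex.I^2*(y:ℂ)^2) * Complex.I_sq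
  have hsub : (∫ t in Set.Ioi (0:ℝ), f ((1/2)*t)) = (2:ℂ) * ∫ u in Set.Ioi (0:ℝ), f u := by
    rw [integral_comp_mul_left_Ioi f 0 (by norm_num : (0:ℝ) < 1/2)]
    norm_num
  have hJ : (∫ s in (0:ℝ)..1, Complex.exp (-((s:ℂ)*c)^2)) =
      ∫ s in (0:ℝ)..1, Complex.exp (((s : ℂ) * z) ^ 2) := by
    have hfun : (fun s : ℝ => Complex.exp (-((s:ℂ)*c)^2)) =
        fun s : ℝ => Complex.exp (((s : ℂ) * z) ^ 2) := by
      funext s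
      congr 1
      rw [hc]
      linear_combination (-(s:ℂ)^2*((x:ℂ)^2 + 2*Complex.I*(x:ℂ)*(y:ℂ) + Complex.I^2*(y:ℂ)^2)) * Complex.I_sq
    rw [hfun]
  calc faddeeva z
      = Complex.exp (-z ^ 2) *
        (1 + (2 * Complex.I / (Real.sqrt Real.pi : ℂ)) *
          (z * ∫ s in (0:ℝ)..1, Complex.exp (((s : ℂ) * z) ^ 2))) := rfl
    _ = (1 / (Real.sqrt Real.pi : ℂ)) *
        ∫ t in Set.Ioi (0:ℝ), Complex.exp (-z^2) * f ((1/2)*t) := by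
        rw [MeasureTheory.integral_const_mul, hsub, key c, hJ]
        have hpi : ((Real.sqrt Real.pi : ℝ) : ℂ) ≠ 0 := by
          simpa using (Real.sqrt_pos.mpr Real.pi_pos).ne'
        field_simp
        ring
    _ = (1 / (Real.sqrt Real.pi : ℂ)) *
        ∫ t in Set.Ioi (0:ℝ),
          Complex.exp (-(t : ℂ) ^ 2 / 4) * Complex.exp (-(y : ℂ) * (t : ℂ)) *
            Complex.exp (Complex.I * (x : ℂ) * (t : ℂ)) := by
        congr 1
        exact (integral_congr_ae (Eventually.of_forall (fun t => (hint t)))).symm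
end

section
/- For every complex z with Im(z) > 0, the complex probability function equals the complex error function: (i/π) ∫_{−∞}^{∞} e^{−t²}/(z − t) dt = w(z). -/
open Real MeasureTheory
open Set Filter Complex intervalIntegral Metric

lemma integrableOn_cexp_Ioi {a : ℂ} (ha : 0 < a.re) :
    IntegrableOn (fun s : ℝ => Complex.exp (-(a * s))) (Ioi 0) := by
  apply Integrable.mono' (exp_neg_integrableOn_Ioi 0 ha)
  · exact (Complex.continuous_exp.comp (by continuity)).aestronglyMeasurable
  · filter_upwards with s
    rw [Complex.norm_exp]
    simp [mul_comm]

lemma integral_cexp_Ioi {a : ℂ} (ha : 0 < a.re) :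
    ∫ s in Ioi (0:ℝ), Complex.exp (-(a * s)) = a⁻¹ := by
  have ha' : a ≠ 0 := fun h => by simp [h] at ha
  have hd : ∀ x : ℝ, HasDerivAt (fun s : ℝ => -a⁻¹ * Complex.exp (-(a * s)))
      (Complex.exp (-(a * x))) x := by
    intro x
    have h1 : HasDerivAt (fun w : ℂ => -a⁻¹ * Complex.exp (-(a * w)))
        (Complex.exp (-(a * x))) (x : ℝ) := by
      have h2 := (((hasDerivAt_id (x:ℂ)).const_mul a).neg).cexp.const_mul (-a⁻¹)
      refine h2.congr_deriv ?_
      simp only [Pi.neg_apply, id]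
      field_simp
    exact h1.comp_ofReal
  have hT : Tendsto (fun s : ℝ => -a⁻¹ * Complex.exp (-(a * s))) atTop (nhds 0) := by
    rw [tendsto_zero_iff_norm_tendsto_zero]
    have he : (fun s : ℝ => ‖-a⁻¹ * Complex.exp (-(a * s))‖)
        = fun s : ℝ => ‖a⁻¹‖ * Real.exp (-(a.re * s)) := by
      ext s
      rw [norm_mul, norm_neg, Complex.norm_exp]
      simp [mul_comm]
    rw [he, show (0:ℝ) = ‖a⁻¹‖ * 0 by ring]
    apply Tendsto.const_mul
    apply Real.tendsto_exp_atBot.comp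
    have := (tendsto_const_mul_atTop_of_pos ha).mpr (tendsto_id (α := ℝ))
    exact tendsto_neg_atBot_iff.mpr this
  have := integral_Ioi_of_hasDerivAt_of_tendsto' (f := fun s : ℝ => -a⁻¹ * Complex.exp (-(a * s)))
    (fun x _ => hd x) (integrableOn_cexp_Ioi ha) hT
  rw [this]
  simp


lemma integrable_gauss_aux (a c : ℝ) (hc : 0 ≤ c) :
    Integrable (fun u : ℝ => (|u| + c) * Real.exp (-u^2 + a*u)) := by
  have h3 : Integrable (fun v : ℝ => |v| * Real.exp (-v^2)) := by
    have h2 := (integrable_mul_exp_neg_mul_sq (one_pos)).abs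
    simpa [abs_mul, _root_.abs_of_nonneg (Real.exp_pos _).le] using h2
  have h4 : Integrable (fun v : ℝ => Real.exp (-v^2)) := by
    simpa using integrable_exp_neg_mul_sq (one_pos)
  have h1 : Integrable (fun v : ℝ => (|v| + (|a/2| + c)) * Real.exp (-v^2)) := by
    have := h3.add (h4.const_mul (|a/2| + c))
    refine this.congr (Eventually.of_forall fun v => ?_)
    simp only [Pi.add_apply]; ring
  have h5 := ((h1.comp_sub_right (a/2)).const_mul (Real.exp (a^2/4)))
  apply h5.mono'
  · apply Continuous.aestronglyMeasurable
    continuity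
  · filter_upwards with u
    have he : Real.exp (-u^2 + a*u) = Real.exp (a^2/4) * Real.exp (-(u - a/2)^2) := by
      rw [← Real.exp_add]; ring_nf
    have hnn : 0 ≤ (|u| + c) * Real.exp (-u^2 + a*u) :=
      mul_nonneg (by positivity) (Real.exp_pos _).le
    rw [Real.norm_of_nonneg hnn, he]
    have htri : |u| + c ≤ |u - a/2| + (|a/2| + c) := by
      have : |u| ≤ |u - a/2| + |a/2| := by
        calc |u| = |(u - a/2) + a/2| := by ring_nf
        _ ≤ |u - a/2| + |a/2| := abs_add_le _ _
      linarith
    have : (|u| + c) * (Real.exp (a^2/4) * Real.exp (-(u - a/2)^2))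
        ≤ (|u - a/2| + (|a/2| + c)) * (Real.exp (a^2/4) * Real.exp (-(u - a/2)^2)) := by
      apply mul_le_mul_of_nonneg_right htri (by positivity)
    calc (|u| + c) * (Real.exp (a^2/4) * Real.exp (-(u - a/2)^2))
        ≤ (|u - a/2| + (|a/2| + c)) * (Real.exp (a^2/4) * Real.exp (-(u - a/2)^2)) := this
      _ = Real.exp (a^2/4) * ((|u - a/2| + (|a/2| + c)) * Real.exp (-(u - a/2)^2)) := by ring

-- norm of the Gaussian on a shifted line
lemma norm_cexp_aux (r u : ℝ) (z : ℂ) :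
    ‖Complex.exp (-((u:ℂ) - Complex.I*(r:ℂ)*z)^2)‖
      = Real.exp ((r*z.re)^2) * Real.exp (-(u + r*z.im)^2) := by
  rw [Complex.norm_exp, ← Real.exp_add]
  congr 1
  simp [pow_two, Complex.sub_re, Complex.sub_im, Complex.mul_re, Complex.mul_im]
  ring

-- derivative wrt r (complex chain rule, then restrict to ℝ)
lemma hasDerivAt_F (z : ℂ) (u r : ℝ) :
    HasDerivAt (fun r : ℝ => Complex.exp (-((u:ℂ) - Complex.I*(r:ℂ)*z)^2))
      ((2*Complex.I*z*((u:ℂ) - Complex.I*(r:ℂ)*z)) *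
        Complex.exp (-((u:ℂ) - Complex.I*(r:ℂ)*z)^2)) r := by
  have h : HasDerivAt (fun w : ℂ => Complex.exp (-((u:ℂ) - Complex.I*w*z)^2))
      ((2*Complex.I*z*((u:ℂ) - Complex.I*(r:ℂ)*z)) *
        Complex.exp (-((u:ℂ) - Complex.I*(r:ℂ)*z)^2)) (r:ℝ) := by
    have h1 : HasDerivAt (fun w : ℂ => (u:ℂ) - Complex.I*w*z) (-(Complex.I*z)) (r:ℂ) := by
      have := ((hasDerivAt_id (r:ℂ)).const_mul Complex.I).mul_const z
      refine ((hasDerivAt_const (r:ℂ) (u:ℂ)).sub this).congr_deriv ?_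
      ring
    have h2 := ((h1.pow 2).neg).cexp
    refine h2.congr_deriv ?_
    simp only [Pi.neg_apply, Pi.pow_apply]
    ring
  exact h.comp_ofReal

-- derivative wrt u
lemma hasDerivAt_F_u (z : ℂ) (r u : ℝ) :
    HasDerivAt (fun u : ℝ => (-(Complex.I*z)) * Complex.exp (-((u:ℂ) - Complex.I*(r:ℂ)*z)^2))
      ((2*Complex.I*z*((u:ℂ) - Complex.I*(r:ℂ)*z)) *
        Complex.exp (-((u:ℂ) - Complex.I*(r:ℂ)*z)^2)) u := by
  have h : HasDerivAt (fun w : ℂ => (-(Complex.I*z)) * Complex.exp (-(w - Complex.I*(r:ℂ)*z)^2))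
      ((2*Complex.I*z*((u:ℂ) - Complex.I*(r:ℂ)*z)) *
        Complex.exp (-((u:ℂ) - Complex.I*(r:ℂ)*z)^2)) (u:ℝ) := by
    have h1 : HasDerivAt (fun w : ℂ => w - Complex.I*(r:ℂ)*z) 1 (u:ℂ) :=
      (hasDerivAt_id _).sub_const _
    have h2 := (((h1.pow 2).neg).cexp).const_mul (-(Complex.I*z))
    refine h2.congr_deriv ?_
    simp only [Pi.neg_apply, Pi.pow_apply]
    ring
  exact h.comp_ofReal

lemma integrableOn_F (z : ℂ) (r : ℝ) :
    IntegrableOn (fun u : ℝ => Complex.exp (-((u:ℂ) - Complex.I*(r:ℂ)*z)^2)) (Ioi 0) := by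
  have h4 : Integrable (fun v : ℝ => Real.exp (-v^2)) := by
    simpa using integrable_exp_neg_mul_sq (one_pos)
  apply Integrable.mono' (((h4.comp_add_right (r*z.im)).const_mul
    (Real.exp ((r*z.re)^2))).integrableOn)
  · exact (Complex.continuous_exp.comp (by continuity)).aestronglyMeasurable
  · filter_upwards with u
    rw [show ‖Complex.exp (-((u:ℂ) - Complex.I*(r:ℂ)*z)^2)‖
      = Real.exp ((r*z.re)^2) * Real.exp (-(u + r*z.im)^2) from norm_cexp_aux r u z]

lemma tendsto_F_atTop (z : ℂ) (r : ℝ) :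
    Tendsto (fun u : ℝ => (-(Complex.I*z)) * Complex.exp (-((u:ℂ) - Complex.I*(r:ℂ)*z)^2))
      atTop (nhds 0) := by
  rw [tendsto_zero_iff_norm_tendsto_zero]
  have he : (fun u : ℝ => ‖(-(Complex.I*z)) * Complex.exp (-((u:ℂ) - Complex.I*(r:ℂ)*z)^2)‖)
      = fun u : ℝ => (‖z‖ * Real.exp ((r*z.re)^2)) * Real.exp (-(u + r*z.im)^2) := by
    ext u
    rw [norm_mul, norm_cexp_aux r u z, norm_neg, norm_mul, Complex.norm_I, one_mul]
    ring
  rw [he, show (0:ℝ) = (‖z‖ * Real.exp ((r*z.re)^2)) * 0 by ring]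
  apply Tendsto.const_mul
  apply Real.tendsto_exp_atBot.comp
  rw [tendsto_neg_atBot_iff]
  exact (tendsto_pow_atTop two_ne_zero).comp (tendsto_atTop_add_const_right atTop _ tendsto_id)

lemma integrableOn_F' (z : ℂ) (r : ℝ) :
    IntegrableOn (fun u : ℝ => (2*Complex.I*z*((u:ℂ) - Complex.I*(r:ℂ)*z)) *
      Complex.exp (-((u:ℂ) - Complex.I*(r:ℂ)*z)^2)) (Ioi 0) := by
  apply Integrable.mono' (((integrable_gauss_aux (2*(|r| * ‖z‖)) ((|r| * ‖z‖))
      (by positivity)).const_mul ((2*‖z‖) * Real.exp (((|r| * ‖z‖))^2))).integrableOn)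
  · exact (Continuous.mul (by continuity) (Complex.continuous_exp.comp
      (by continuity))).aestronglyMeasurable
  · rw [ae_restrict_iff' measurableSet_Ioi]
    filter_upwards with u hu
    rw [norm_mul, norm_cexp_aux r u z]
    have h1 : ‖2*Complex.I*z*((u:ℂ) - Complex.I*(r:ℂ)*z)‖ ≤ 2*‖z‖*(|u| + (|r| * ‖z‖)) := by
      rw [norm_mul]
      have e1 : ‖2*Complex.I*z‖ = 2*‖z‖ := by
        simp [norm_mul]
      rw [e1]
      apply mul_le_mul_of_nonneg_left _ (by positivity)
      calc ‖(u:ℂ) - Complex.I*(r:ℂ)*z‖ ≤ ‖(u:ℂ)‖ + ‖Complex.I*(r:ℂ)*z‖ := norm_sub_le _ _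
        _ = |u| + (|r| * ‖z‖) := by simp [norm_mul]
    have h2 : Real.exp ((r*z.re)^2) ≤ Real.exp (((|r| * ‖z‖))^2) := by
      apply Real.exp_le_exp.mpr
      have : |r * z.re| ≤ |r| * ‖z‖ := by
        rw [abs_mul]
        exact mul_le_mul_of_nonneg_left (Complex.abs_re_le_norm z) (abs_nonneg r)
      nlinarith [abs_nonneg (r * z.re), _root_.sq_abs (r*z.re)]
    have h3 : Real.exp (-(u + r*z.im)^2) ≤ Real.exp (-u^2 + (2*(|r| * ‖z‖))*u) := by
      apply Real.exp_le_exp.mpr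
      have hu' : 0 < u := hu
      have him : |z.im| ≤ ‖z‖ := Complex.abs_im_le_norm z
      have : |2*u*(r*z.im)| ≤ 2*u*((|r| * ‖z‖)) := by
        rw [abs_mul, abs_mul, abs_mul]
        have : |(2:ℝ)| = 2 := by norm_num
        rw [this, abs_of_pos hu']
        apply mul_le_mul_of_nonneg_left _ (by positivity)
        exact mul_le_mul (le_refl _) him (abs_nonneg _) (abs_nonneg _)
      nlinarith [sq_nonneg (r*z.im), neg_le_abs (2*u*(r*z.im))]
    calc ‖2*Complex.I*z*((u:ℂ) - Complex.I*(r:ℂ)*z)‖ *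
          (Real.exp ((r*z.re)^2) * Real.exp (-(u + r*z.im)^2))
        ≤ (2*‖z‖*(|u| + (|r| * ‖z‖))) * (Real.exp (((|r| * ‖z‖))^2) * Real.exp (-u^2 + (2*(|r| * ‖z‖))*u)) := by
          apply mul_le_mul h1 (mul_le_mul h2 h3 (Real.exp_pos _).le (Real.exp_pos _).le)
            (by positivity) (by positivity)
      _ = (2*‖z‖) * Real.exp (((|r| * ‖z‖))^2) * ((|u| + (|r| * ‖z‖)) * Real.exp (-u^2 + (2*(|r| * ‖z‖))*u)) := by
          ring

lemma hasDerivAt_phi (z : ℂ) (r₀ : ℝ) :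
    HasDerivAt (fun r : ℝ => ∫ u in Ioi (0:ℝ), Complex.exp (-((u:ℂ) - Complex.I*(r:ℂ)*z)^2))
      (Complex.I * z * Complex.exp (((r₀:ℂ)*z)^2)) r₀ := by
  set R : ℝ := |r₀| + 1 with hR
  have hmain := hasDerivAt_integral_of_dominated_loc_of_deriv_le (μ := volume.restrict (Ioi 0))
    (F := fun (r : ℝ) (u : ℝ) => Complex.exp (-((u:ℂ) - Complex.I*(r:ℂ)*z)^2))
    (F' := fun (r : ℝ) (u : ℝ) => (2*Complex.I*z*((u:ℂ) - Complex.I*(r:ℂ)*z)) *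
      Complex.exp (-((u:ℂ) - Complex.I*(r:ℂ)*z)^2))
    (x₀ := r₀) (s := ball r₀ 1)
    (bound := fun u => (2*‖z‖) * Real.exp ((R*‖z‖)^2) *
      ((|u| + R * ‖z‖) * Real.exp (-u^2 + (2*R*‖z‖)*u)))
    (ball_mem_nhds r₀ one_pos)
    (Eventually.of_forall fun r => (Complex.continuous_exp.comp
      (by continuity)).aestronglyMeasurable)
    (integrableOn_F z r₀)
    ((Continuous.mul (by continuity) (Complex.continuous_exp.comp
      (by continuity))).aestronglyMeasurable)
    ?_ ?_ ?_
  · -- conclusion: rewrite the integral of F'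
    have hint : (∫ u in Ioi (0:ℝ), (2*Complex.I*z*((u:ℂ) - Complex.I*(r₀:ℂ)*z)) *
        Complex.exp (-((u:ℂ) - Complex.I*(r₀:ℂ)*z)^2)) = Complex.I * z * Complex.exp (((r₀:ℂ)*z)^2) := by
      rw [integral_Ioi_of_hasDerivAt_of_tendsto' (fun u _ => hasDerivAt_F_u z r₀ u)
        (integrableOn_F' z r₀) (tendsto_F_atTop z r₀)]
      rw [show ((0:ℝ):ℂ) - Complex.I*(r₀:ℂ)*z = -(Complex.I*(r₀:ℂ)*z) by push_cast; ring]
      rw [show -(-(Complex.I*(r₀:ℂ)*z))^2 = ((r₀:ℂ)*z)^2 by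
        rw [neg_pow]; ring_nf; rw [Complex.I_sq]; ring]
      ring
    rw [← hint]
    exact hmain.2
  · -- bound
    rw [ae_restrict_iff' measurableSet_Ioi]
    filter_upwards with u hu
    intro r hr
    have hrR : |r| ≤ R := by
      rw [Metric.mem_ball, Real.dist_eq] at hr
      have := abs_sub_abs_le_abs_sub r r₀
      rw [hR]; linarith
    -- same computation as integrableOn_F', with |r| ≤ R
    rw [norm_mul, norm_cexp_aux r u z]
    have hz0 : (0:ℝ) ≤ ‖z‖ := norm_nonneg z
    have hrn : (0:ℝ) ≤ |r| := abs_nonneg r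
    have hR0 : (0:ℝ) ≤ R := le_trans hrn hrR
    have h1 : ‖2*Complex.I*z*((u:ℂ) - Complex.I*(r:ℂ)*z)‖ ≤ 2*‖z‖*(|u| + R * ‖z‖) := by
      rw [norm_mul]
      have e1 : ‖2*Complex.I*z‖ = 2*‖z‖ := by simp [norm_mul]
      rw [e1]
      apply mul_le_mul_of_nonneg_left _ (by positivity)
      calc ‖(u:ℂ) - Complex.I*(r:ℂ)*z‖ ≤ ‖(u:ℂ)‖ + ‖Complex.I*(r:ℂ)*z‖ := norm_sub_le _ _
        _ = |u| + (|r| * ‖z‖) := by simp [norm_mul]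
        _ ≤ |u| + R * ‖z‖ := by nlinarith
    have h2 : Real.exp ((r*z.re)^2) ≤ Real.exp ((R*‖z‖)^2) := by
      apply Real.exp_le_exp.mpr
      have : |r * z.re| ≤ R * ‖z‖ := by
        rw [abs_mul]
        calc |r| * |z.re| ≤ |r| * ‖z‖ :=
          mul_le_mul_of_nonneg_left (Complex.abs_re_le_norm z) hrn
        _ ≤ R * ‖z‖ := mul_le_mul_of_nonneg_right hrR hz0
      nlinarith [abs_nonneg (r * z.re), _root_.sq_abs (r*z.re)]
    have h3 : Real.exp (-(u + r*z.im)^2) ≤ Real.exp (-u^2 + (2*R*‖z‖)*u) := by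
      apply Real.exp_le_exp.mpr
      have hu' : 0 < u := hu
      have him : |z.im| ≤ ‖z‖ := Complex.abs_im_le_norm z
      have : |2*u*(r*z.im)| ≤ 2*u*(R*‖z‖) := by
        rw [abs_mul, abs_mul, abs_mul]
        have h2' : |(2:ℝ)| = 2 := by norm_num
        rw [h2', abs_of_pos hu']
        apply mul_le_mul_of_nonneg_left _ (by positivity)
        calc |r| * |z.im| ≤ |r| * ‖z‖ := mul_le_mul_of_nonneg_left him hrn
          _ ≤ R * ‖z‖ := mul_le_mul_of_nonneg_right hrR hz0
      nlinarith [sq_nonneg (r*z.im), neg_le_abs (2*u*(r*z.im))]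
    calc ‖2*Complex.I*z*((u:ℂ) - Complex.I*(r:ℂ)*z)‖ *
          (Real.exp ((r*z.re)^2) * Real.exp (-(u + r*z.im)^2))
        ≤ (2*‖z‖*(|u| + R * ‖z‖)) * (Real.exp ((R*‖z‖)^2) * Real.exp (-u^2 + (2*R*‖z‖)*u)) := by
          apply mul_le_mul h1 (mul_le_mul h2 h3 (Real.exp_pos _).le (Real.exp_pos _).le)
            (by positivity) (by positivity)
      _ = (2*‖z‖) * Real.exp ((R*‖z‖)^2) * ((|u| + R * ‖z‖) * Real.exp (-u^2 + (2*R*‖z‖)*u)) := by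
          ring
  · -- bound integrable
    exact ((integrable_gauss_aux (2*R*‖z‖) (R*‖z‖) (by positivity)).const_mul _).integrableOn
  · -- differentiability
    filter_upwards with u
    intro r _
    exact hasDerivAt_F z u r

lemma phi_zero (z : ℂ) :
    (∫ u in Ioi (0:ℝ), Complex.exp (-((u:ℂ) - Complex.I*((0:ℝ):ℂ)*z)^2))
      = ((Real.sqrt π / 2 : ℝ) : ℂ) := by
  have h : ∀ u : ℝ, Complex.exp (-((u:ℂ) - Complex.I*((0:ℝ):ℂ)*z)^2)
      = ((Real.exp (-u^2) : ℝ) : ℂ) := by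
    intro u
    rw [Complex.ofReal_exp]
    push_cast
    norm_num
  simp_rw [h]
  have hg : (∫ u in Ioi (0:ℝ), Real.exp (-u^2)) = Real.sqrt π / 2 := by
    have := integral_gaussian_Ioi 1
    simpa using this
  calc (∫ u in Ioi (0:ℝ), ((Real.exp (-u^2) : ℝ) : ℂ))
      = ((∫ u in Ioi (0:ℝ), Real.exp (-u^2) : ℝ) : ℂ) := integral_ofReal
    _ = ((Real.sqrt π / 2 : ℝ) : ℂ) := by rw [hg]

lemma key_G (z : ℂ) :
    (∫ u in Ioi (0:ℝ), Complex.exp (-((u:ℂ) - Complex.I*z)^2))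
      = ((Real.sqrt π / 2 : ℝ) : ℂ)
        + Complex.I * z * ∫ s in (0:ℝ)..1, Complex.exp (((s:ℂ)*z)^2) := by
  have hcont : Continuous (fun r : ℝ => Complex.I * z * Complex.exp (((r:ℂ)*z)^2)) :=
    continuous_const.mul (Complex.continuous_exp.comp (by continuity))
  have hftc := intervalIntegral.integral_eq_sub_of_hasDerivAt
    (f := fun r : ℝ => ∫ u in Ioi (0:ℝ), Complex.exp (-((u:ℂ) - Complex.I*(r:ℂ)*z)^2))
    (f' := fun r : ℝ => Complex.I * z * Complex.exp (((r:ℂ)*z)^2))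
    (a := 0) (b := 1)
    (fun r _ => hasDerivAt_phi z r)
    (hcont.intervalIntegrable 0 1)
  rw [intervalIntegral.integral_const_mul] at hftc
  have h0 := phi_zero z
  have h1 : (∫ u in Ioi (0:ℝ), Complex.exp (-((u:ℂ) - Complex.I*((1:ℝ):ℂ)*z)^2))
      = ∫ u in Ioi (0:ℝ), Complex.exp (-((u:ℂ) - Complex.I*z)^2) := by
    norm_num
  rw [show ((1:ℝ):ℂ) = (1:ℂ) by norm_num] at hftc
  rw [show ((0:ℝ):ℂ) = (0:ℂ) by norm_num] at hftc h0
  rw [show ((1:ℝ):ℂ) = (1:ℂ) by norm_num] at h1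
  rw [h1, h0] at hftc
  rw [hftc]; ring

lemma integrable_prod_aux (z : ℂ) (hz : 0 < z.im) :
    Integrable (fun p : ℝ × ℝ =>
        Complex.exp (-(p.1:ℂ)^2 + Complex.I*(p.2:ℂ)*(z - (p.1:ℂ))))
      (volume.prod (volume.restrict (Ioi 0))) := by
  have h_t : Integrable (fun t : ℝ => Real.exp (-t^2)) := by
    simpa using integrable_exp_neg_mul_sq one_pos
  have h_s : Integrable (fun s : ℝ => Real.exp (-z.im * s)) (volume.restrict (Ioi 0)) :=
    exp_neg_integrableOn_Ioi 0 hz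
  apply Integrable.mono' (h_t.mul_prod h_s)
  · exact (Complex.continuous_exp.comp (by continuity)).aestronglyMeasurable
  · filter_upwards with p
    rw [Complex.norm_exp, ← Real.exp_add]
    apply le_of_eq
    congr 1
    simp [Complex.add_re, Complex.mul_re, Complex.mul_im, Complex.sub_re, Complex.sub_im,
      ← Complex.ofReal_pow, Complex.ofReal_re]
    ring

lemma inner_t_integral (z : ℂ) (s : ℝ) :
    (∫ t : ℝ, Complex.exp (-(t:ℂ)^2 + Complex.I*(s:ℂ)*(z - (t:ℂ))))
      = ((Real.sqrt π : ℝ) : ℂ) * Complex.exp (Complex.I*(s:ℂ)*z - (s:ℂ)^2/4) := by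
  have hb : (0:ℝ) < (1:ℂ).re := by simp
  have hfou := fourierIntegral_gaussian hb (-(s:ℂ))
  have hsqrt : ((Real.pi : ℝ) / (1:ℂ)) ^ (1/2 : ℂ) = ((Real.sqrt π : ℝ) : ℂ) := by
    rw [div_one]
    rw [show (1/2 : ℂ) = ((1/2 : ℝ) : ℂ) by norm_num]
    rw [← Complex.ofReal_cpow pi_pos.le]
    rw [Real.sqrt_eq_rpow]
  rw [hsqrt] at hfou
  have hpt : ∀ t : ℝ, Complex.exp (-(t:ℂ)^2 + Complex.I*(s:ℂ)*(z - (t:ℂ)))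
      = Complex.exp (Complex.I*(s:ℂ)*z) *
        (Complex.exp (Complex.I * (-(s:ℂ)) * (t:ℂ)) * Complex.exp (-1 * (t:ℂ)^2)) := by
    intro t
    rw [← Complex.exp_add, ← Complex.exp_add]
    congr 1
    ring
  simp_rw [hpt]
  rw [MeasureTheory.integral_const_mul, hfou]
  rw [show Complex.exp (Complex.I*(s:ℂ)*z) * (((Real.sqrt π : ℝ):ℂ) * Complex.exp (-(-(s:ℂ))^2/(4*1)))
      = ((Real.sqrt π : ℝ):ℂ) * (Complex.exp (Complex.I*(s:ℂ)*z) * Complex.exp (-(-(s:ℂ))^2/(4*1))) by ring]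
  rw [← Complex.exp_add]
  congr 2
  ring


/-- For every complex `z` with `Im(z) > 0`, the complex probability function
equals the complex error function:
`(i/π) ∫_{−∞}^{∞} e^{−t²}/(z − t) dt = w(z)`. -/
theorem complex_probability_eq_faddeeva (z : ℂ) (hz : 0 < z.im) :
    (Complex.I / (Real.pi : ℂ)) *
        (∫ t : ℝ, Complex.exp (-(t : ℂ) ^ 2) / (z - (t : ℂ))) =
      faddeeva z := by
  have hzt : ∀ t : ℝ, z - (t:ℂ) ≠ 0 := by
    intro t h
    have h2 : (z - (t:ℂ)).im = 0 := by rw [h]; simp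
    simp [Complex.sub_im] at h2
    linarith
  have ha : ∀ t : ℝ, (0:ℝ) < (-Complex.I * (z - (t:ℂ))).re := by
    intro t
    have : (-Complex.I * (z - (t:ℂ))).re = z.im := by simp [Complex.mul_re]
    rw [this]; exact hz
  have step1 : ∀ t : ℝ, Complex.exp (-(t:ℂ)^2) / (z - (t:ℂ))
      = -Complex.I * ∫ s in Ioi (0:ℝ), Complex.exp (-(t:ℂ)^2 + Complex.I*(s:ℂ)*(z - (t:ℂ))) := by
    intro t
    have hsplit : ∀ s : ℝ, Complex.exp (-(t:ℂ)^2 + Complex.I*(s:ℂ)*(z - (t:ℂ)))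
        = Complex.exp (-(t:ℂ)^2) * Complex.exp (-((-Complex.I * (z - (t:ℂ))) * (s:ℂ))) := by
      intro s
      rw [← Complex.exp_add]
      congr 1
      ring
    simp_rw [hsplit]
    rw [MeasureTheory.integral_const_mul, integral_cexp_Ioi (ha t)]
    have hne : -Complex.I * (z - (t:ℂ)) ≠ 0 :=
      mul_ne_zero (neg_ne_zero.mpr Complex.I_ne_zero) (hzt t)
    rw [div_eq_iff (hzt t)]
    rw [show -Complex.I * (Complex.exp (-(t:ℂ)^2) * (-Complex.I * (z - (t:ℂ)))⁻¹) * (z - (t:ℂ))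
        = Complex.exp (-(t:ℂ)^2) * ((-Complex.I * (z - (t:ℂ)))⁻¹ * (-Complex.I * (z - (t:ℂ)))) by ring]
    rw [inv_mul_cancel₀ hne, mul_one]
  -- rewrite the full integral
  have e1 : (∫ t : ℝ, Complex.exp (-(t:ℂ)^2) / (z - (t:ℂ)))
      = -Complex.I * ∫ t : ℝ, ∫ s in Ioi (0:ℝ),
          Complex.exp (-(t:ℂ)^2 + Complex.I*(s:ℂ)*(z - (t:ℂ))) := by
    simp_rw [step1]
    rw [MeasureTheory.integral_const_mul]
  have e2 : (∫ t : ℝ, ∫ s in Ioi (0:ℝ),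
        Complex.exp (-(t:ℂ)^2 + Complex.I*(s:ℂ)*(z - (t:ℂ))))
      = ∫ s in Ioi (0:ℝ), ∫ t : ℝ,
        Complex.exp (-(t:ℂ)^2 + Complex.I*(s:ℂ)*(z - (t:ℂ))) :=
    MeasureTheory.integral_integral_swap (integrable_prod_aux z hz)
  have e3 : (∫ s in Ioi (0:ℝ), ∫ t : ℝ,
        Complex.exp (-(t:ℂ)^2 + Complex.I*(s:ℂ)*(z - (t:ℂ))))
      = ((Real.sqrt π : ℝ):ℂ) * ∫ s in Ioi (0:ℝ),
          Complex.exp (Complex.I*(s:ℂ)*z - (s:ℂ)^2/4) := by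
    simp_rw [inner_t_integral z]
    rw [MeasureTheory.integral_const_mul]
  -- substitution s = 2u
  have hsub := integral_comp_mul_left_Ioi
    (fun s : ℝ => Complex.exp (Complex.I*(s:ℂ)*z - (s:ℂ)^2/4)) 0 two_pos
  rw [mul_zero] at hsub
  have hpt : ∀ x : ℝ, Complex.exp (Complex.I*((2*x:ℝ):ℂ)*z - ((2*x:ℝ):ℂ)^2/4)
      = Complex.exp (-z^2) * Complex.exp (-((x:ℂ) - Complex.I*z)^2) := by
    intro x
    rw [← Complex.exp_add]
    push_cast
    congr 1
    linear_combination (z:ℂ)^2 * Complex.I_sq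
  simp_rw [hpt] at hsub
  rw [MeasureTheory.integral_const_mul, key_G z, Complex.real_smul] at hsub
  -- assemble
  rw [e1, e2, e3]
  set S : ℂ := ∫ s in (0:ℝ)..1, Complex.exp (((s:ℂ)*z)^2) with hS
  rw [show (∫ s in Ioi (0:ℝ), Complex.exp (Complex.I*(s:ℂ)*z - (s:ℂ)^2/4))
      = 2 * (Complex.exp (-z^2) * (((Real.sqrt π / 2 : ℝ):ℂ) + Complex.I * z * S)) by
    push_cast at hsub ⊢
    linear_combination -2*hsub]
  rw [faddeeva]
  have hs0 : ((Real.sqrt π : ℝ):ℂ) ≠ 0 := by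
    norm_cast
    exact (Real.sqrt_pos.mpr pi_pos).ne'
  have hpp : ((Real.sqrt π : ℝ):ℂ) * ((Real.sqrt π : ℝ):ℂ) = ((π:ℝ):ℂ) := by
    norm_cast
    exact Real.mul_self_sqrt pi_pos.le
  have hpi0 : ((π:ℝ):ℂ) ≠ 0 := by
    norm_cast
    exact pi_ne_zero
  rw [show ((Real.sqrt π / 2 : ℝ):ℂ) = ((Real.sqrt π:ℝ):ℂ)/2 by push_cast; ring]
  rw [show Complex.I / ((π:ℝ):ℂ) * (-Complex.I * (((Real.sqrt π:ℝ):ℂ) *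
        (2 * (Complex.exp (-z^2) * (((Real.sqrt π:ℝ):ℂ)/2 + Complex.I*z*S)))))
      = (Complex.I * -Complex.I) * (Complex.exp (-z^2) *
        ((((Real.sqrt π:ℝ):ℂ)*((Real.sqrt π:ℝ):ℂ))/((π:ℝ):ℂ)
          + 2*((Real.sqrt π:ℝ):ℂ)/((π:ℝ):ℂ)*(Complex.I*z*S))) by ring]
  rw [show Complex.I * -Complex.I = 1 by rw [mul_neg, Complex.I_mul_I, neg_neg]]
  rw [hpp, div_self hpi0]
  rw [show 2*((Real.sqrt π:ℝ):ℂ)/((π:ℝ):ℂ) = 2/((Real.sqrt π:ℝ):ℂ) by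
    rw [← hpp]; field_simp]
  ring
end

section
/- For all real x and all real y > 0, the real part of the complex error function at z = x + iy equals the Voigt function: Re[w(x + iy)] = (y/π) ∫_{−∞}^{∞} e^{−t²}/(y² + (x − t)²) dt. -/
open Real MeasureTheory

open Set Complex Filter

noncomputable def gfun (z : ℂ) : ℂ :=
  ∫ s in Set.Ioi (0:ℝ), Complex.exp (-(s:ℂ)^2/4 + Complex.I * z * s)

lemma re_aux (z : ℂ) (s : ℝ) : (-(s:ℂ)^2/4 + Complex.I * z * s).re = -s^2/4 - z.im * s := by
  simp [Complex.add_re, Complex.div_re, Complex.mul_re, Complex.mul_im, ← Complex.ofReal_pow]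
  ring

lemma norm_aux (z : ℂ) (s : ℝ) :
    ‖Complex.exp (-(s:ℂ)^2/4 + Complex.I * z * s)‖ = Real.exp (-s^2/4 - z.im * s) := by
  rw [Complex.norm_exp, re_aux]

lemma cont_aux (z : ℂ) : Continuous fun s : ℝ => Complex.exp (-(s:ℂ)^2/4 + Complex.I * z * s) := by
  fun_prop

lemma integrable_g (z : ℂ) (hz : 0 ≤ z.im) :
    IntegrableOn (fun s : ℝ => Complex.exp (-(s:ℂ)^2/4 + Complex.I * z * s)) (Set.Ioi 0) := by
  have hb : Integrable (fun s : ℝ => Real.exp (-(1/4) * s^2)) := integrable_exp_neg_mul_sq (by norm_num)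
  refine Integrable.mono' hb.integrableOn (cont_aux z).aestronglyMeasurable.restrict ?_
  filter_upwards [ae_restrict_mem measurableSet_Ioi] with s hs
  rw [norm_aux]
  apply Real.exp_le_exp.2
  nlinarith [mul_nonneg hz (le_of_lt hs)]

lemma gfun_diff {z₀ : ℂ} (hz : 0 < z₀.im) : DifferentiableAt ℂ gfun z₀ := by
  set ε := z₀.im / 2 with hεdef
  have hε : 0 < ε := by positivity
  have H := hasDerivAt_integral_of_dominated_loc_of_deriv_le (μ := volume.restrict (Set.Ioi 0))
      (F := fun (x : ℂ) (a : ℝ) => Complex.exp (-(a:ℂ)^2/4 + Complex.I * x * a))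
      (F' := fun (x : ℂ) (a : ℝ) => Complex.I * a * Complex.exp (-(a:ℂ)^2/4 + Complex.I * x * a))
      (x₀ := z₀) (bound := fun a => a * Real.exp (-(1/4) * a^2)) (Metric.ball_mem_nhds z₀ hε)
      ?_ (integrable_g z₀ hz.le) ?_ ?_ ?_ ?_
  · exact H.2.differentiableAt
  · filter_upwards with x
    exact (cont_aux x).aestronglyMeasurable.restrict
  · exact (Continuous.aestronglyMeasurable (by fun_prop)).restrict
  · filter_upwards [ae_restrict_mem measurableSet_Ioi] with a ha x hx
    have him : 0 < x.im := by
      have h1 : |x.im - z₀.im| ≤ ‖x - z₀‖ := by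
        simpa using Complex.abs_im_le_norm (x - z₀)
      have h2 : ‖x - z₀‖ < ε := by
        rwa [Metric.mem_ball, Complex.dist_eq] at hx
      have := abs_lt.1 (lt_of_le_of_lt h1 h2)
      linarith [this.1]
    rw [norm_mul, norm_aux]
    have h3 : ‖Complex.I * (a:ℝ)‖ = a := by
      simp [abs_of_pos (show (0:ℝ) < a from ha)]
    rw [h3]
    have : Real.exp (-a^2/4 - x.im * a) ≤ Real.exp (-(1/4) * a^2) := by
      apply Real.exp_le_exp.2
      nlinarith [mul_nonneg him.le ha.le]
    exact mul_le_mul_of_nonneg_left this ha.le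
  · exact (integrable_mul_exp_neg_mul_sq (by norm_num : (0:ℝ) < 1/4)).integrableOn
  · filter_upwards with a x hx
    have h1 : HasDerivAt (fun x : ℂ => -(a:ℂ)^2/4 + Complex.I * x * a) (Complex.I * a) x := by
      have : HasDerivAt (fun x : ℂ => Complex.I * x * a) (Complex.I * a) x := by
        simpa using (((hasDerivAt_id x).const_mul Complex.I).mul_const (a:ℂ))
      simpa using this.const_add (-(a:ℂ)^2/4)
    simpa [mul_comm] using h1.cexp

noncomputable def Gfun (z : ℂ) : ℂ := ∫ s in (0:ℝ)..1, Complex.exp (((s : ℂ) * z) ^ 2)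

lemma Gfun_eq (z : ℂ) : Gfun z = ∫ s in Set.Ioc (0:ℝ) 1, Complex.exp (((s : ℂ) * z) ^ 2) := by
  rw [Gfun, intervalIntegral.integral_of_le zero_le_one]

lemma Gfun_diff (z₀ : ℂ) : DifferentiableAt ℂ Gfun z₀ := by
  have key : DifferentiableAt ℂ
      (fun z => ∫ s in Set.Ioc (0:ℝ) 1, Complex.exp (((s : ℂ) * z) ^ 2)) z₀ := by
    have H := hasDerivAt_integral_of_dominated_loc_of_deriv_le (μ := volume.restrict (Set.Ioc 0 1))
        (F := fun (x : ℂ) (a : ℝ) => Complex.exp (((a:ℂ) * x) ^ 2))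
        (F' := fun (x : ℂ) (a : ℝ) => (2 * ((a:ℂ) * x) * a) * Complex.exp (((a:ℂ) * x) ^ 2))
        (x₀ := z₀) (bound := fun _ => 2 * (‖z₀‖ + 1) * Real.exp ((‖z₀‖ + 1)^2))
        (Metric.ball_mem_nhds z₀ one_pos) ?_ ?_ ?_ ?_ ?_ ?_
    · exact H.2.differentiableAt
    · filter_upwards with x
      exact (Continuous.aestronglyMeasurable (by fun_prop)).restrict
    · apply Continuous.integrableOn_Ioc (by fun_prop)
    · exact (Continuous.aestronglyMeasurable (by fun_prop)).restrict
    · filter_upwards [ae_restrict_mem measurableSet_Ioc] with a ha x hx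
      have hx1 : ‖x‖ ≤ ‖z₀‖ + 1 := by
        have := mem_ball_iff_norm.1 hx
        have := norm_sub_norm_le x z₀
        linarith
      have ha0 : 0 ≤ a := ha.1.le
      have ha1 : a ≤ 1 := ha.2
      rw [norm_mul]
      have h1 : ‖2 * ((a:ℂ) * x) * (a:ℂ)‖ ≤ 2 * (‖z₀‖ + 1) := by
        rw [norm_mul, norm_mul]
        simp only [Complex.norm_real, Real.norm_eq_abs, _root_.abs_of_nonneg ha0]
        have h2 : ‖(2:ℂ)‖ = 2 := by norm_num
        rw [h2, norm_mul, Complex.norm_real, Real.norm_eq_abs, _root_.abs_of_nonneg ha0]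
        calc 2 * (a * ‖x‖) * a ≤ 2 * (1 * (‖z₀‖+1)) * 1 := by
              apply mul_le_mul _ ha1 ha0 (by positivity)
              apply mul_le_mul_of_nonneg_left _ (by norm_num)
              exact mul_le_mul ha1 hx1 (norm_nonneg x) zero_le_one
          _ = 2 * (‖z₀‖ + 1) := by ring
      have h2 : ‖Complex.exp (((a:ℂ) * x) ^ 2)‖ ≤ Real.exp ((‖z₀‖ + 1)^2) := by
        rw [Complex.norm_exp]
        apply Real.exp_le_exp.2
        calc (((a:ℂ) * x) ^ 2).re ≤ ‖((a:ℂ) * x) ^ 2‖ := Complex.re_le_norm _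
          _ = (‖(a:ℂ) * x‖)^2 := by rw [norm_pow]
          _ ≤ (‖z₀‖ + 1)^2 := by
              apply pow_le_pow_left₀ (norm_nonneg _)
              calc ‖(a:ℂ) * x‖ = |a| * ‖x‖ := by
                    rw [norm_mul]; simp
                _ ≤ 1 * (‖z₀‖ + 1) := by
                    apply mul_le_mul _ hx1 (norm_nonneg x) zero_le_one
                    rw [_root_.abs_of_nonneg ha0]; exact ha1
                _ = ‖z₀‖ + 1 := one_mul _
      calc ‖2 * ((a:ℂ) * x) * (a:ℂ)‖ * ‖Complex.exp (((a:ℂ) * x) ^ 2)‖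
            ≤ (2 * (‖z₀‖ + 1)) * Real.exp ((‖z₀‖ + 1)^2) :=
              mul_le_mul h1 h2 (norm_nonneg _) (by positivity)
        _ = 2 * (‖z₀‖ + 1) * Real.exp ((‖z₀‖ + 1)^2) := by ring
    · exact integrableOn_const measure_Ioc_lt_top.ne
    · filter_upwards with a x hx
      have h1 : HasDerivAt (fun x : ℂ => ((a:ℂ) * x) ^ 2) (2 * ((a:ℂ) * x) * a) x := by
        have hinner : HasDerivAt (fun x : ℂ => (a:ℂ) * x) (a:ℂ) x := by
          simpa using (hasDerivAt_id x).const_mul (a:ℂ)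
        simpa using (hinner.fun_pow 2)
      simpa [mul_comm] using h1.cexp
  simpa only [← Gfun_eq] using key.congr_of_eventuallyEq
    (Filter.Eventually.of_forall fun z => (Gfun_eq z))

lemma shift_Ioi (f : ℝ → ℝ) (a y : ℝ) :
    ∫ x in Set.Ioi a, f (x + y) = ∫ x in Set.Ioi (a + y), f x := by
  rw [← integral_indicator measurableSet_Ioi, ← integral_indicator measurableSet_Ioi]
  rw [← integral_add_right_eq_self (fun x => Set.indicator (Set.Ioi (a+y)) f x) y]
  congr 1
  ext x
  rw [Set.indicator_apply, Set.indicator_apply]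
  by_cases h : x ∈ Set.Ioi a
  · rw [if_pos h, if_pos (by simpa [Set.mem_Ioi] using add_lt_add_right h.out y)]
  · rw [if_neg h, if_neg (by simp only [Set.mem_Ioi] at h ⊢; intro hc; exact h (by linarith))]

lemma real_axis (y : ℝ) (hy : 0 < y) :
    ∫ s in Set.Ioi (0:ℝ), Real.exp (-s^2/4 - y*s)
      = Real.exp (y^2) * (Real.sqrt Real.pi - 2 * ∫ u in (0:ℝ)..y, Real.exp (-u^2)) := by
  have hint : Integrable (fun u : ℝ => Real.exp (-u^2)) := by
    simpa using integrable_exp_neg_mul_sq (one_pos)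
  have step1 : ∀ s : ℝ, Real.exp (-s^2/4 - y*s) = Real.exp (y^2) * Real.exp (-(s * (1/2) + y)^2) := by
    intro s
    rw [← Real.exp_add]
    congr 1
    ring
  rw [MeasureTheory.setIntegral_congr_fun measurableSet_Ioi (fun s _ => step1 s)]
  rw [MeasureTheory.integral_const_mul]
  congr 1
  have step2 : ∫ s in Set.Ioi (0:ℝ), Real.exp (-(s * (1/2) + y)^2)
      = 2 * ∫ u in Set.Ioi (0:ℝ), Real.exp (-(u + y)^2) := by
    have := MeasureTheory.integral_comp_mul_right_Ioi (fun u => Real.exp (-(u + y)^2)) 0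
      (b := 1/2) (by norm_num)
    simp only [zero_mul] at this
    rw [this]
    norm_num
  rw [step2, shift_Ioi (fun u => Real.exp (-u^2)) 0 y, zero_add]
  have split : ∫ u in Set.Ioi (0:ℝ), Real.exp (-u^2)
      = (∫ u in Set.Ioc (0:ℝ) y, Real.exp (-u^2)) + ∫ u in Set.Ioi y, Real.exp (-u^2) := by
    rw [← MeasureTheory.setIntegral_union (Set.Ioc_disjoint_Ioi le_rfl) measurableSet_Ioi
      hint.integrableOn hint.integrableOn, Set.Ioc_union_Ioi_eq_Ioi hy.le]
  have gauss : ∫ u in Set.Ioi (0:ℝ), Real.exp (-u^2) = Real.sqrt Real.pi / 2 := by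
    have := integral_gaussian_Ioi 1
    simpa using this
  have hioc : ∫ u in Set.Ioc (0:ℝ) y, Real.exp (-u^2) = ∫ u in (0:ℝ)..y, Real.exp (-u^2) := by
    rw [intervalIntegral.integral_of_le hy.le]
  have := split
  rw [gauss, hioc] at this
  linarith

lemma axis_eq (y : ℝ) (hy : 0 < y) :
    (Real.sqrt Real.pi : ℂ) * faddeeva (Complex.I * y) = gfun (Complex.I * y) := by
  have hπ : (0:ℝ) < Real.sqrt Real.pi := Real.sqrt_pos.2 Real.pi_pos
  have hπ' : (Real.sqrt Real.pi : ℂ) ≠ 0 := by exact_mod_cast hπ.ne'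
  -- RHS
  have hrhs : gfun (Complex.I * y) = ((∫ s in Set.Ioi (0:ℝ), Real.exp (-s^2/4 - y*s) : ℝ) : ℂ) := by
    rw [gfun]
    rw [show (fun s : ℝ => Complex.exp (-(s:ℂ)^2/4 + Complex.I * (Complex.I * y) * s))
        = fun s : ℝ => ((Real.exp (-s^2/4 - y*s) : ℝ) : ℂ) from ?_]
    · exact integral_ofReal
    · funext s
      rw [show (-(s:ℂ)^2/4 + Complex.I * (Complex.I * y) * s) = ((-s^2/4 - y*s : ℝ) : ℂ) from ?_,
        Complex.ofReal_exp]
      rw [show Complex.I * (Complex.I * (y:ℂ)) * (s:ℂ)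
          = Complex.I^2 * ((y:ℂ) * (s:ℂ)) by ring, Complex.I_sq]
      push_cast
      ring
  -- inner interval integral
  have hA : (∫ s in (0:ℝ)..1, Complex.exp (((s : ℂ) * (Complex.I * y)) ^ 2))
      = ((∫ s in (0:ℝ)..1, Real.exp (-(y*s)^2) : ℝ) : ℂ) := by
    rw [show (fun s : ℝ => Complex.exp (((s : ℂ) * (Complex.I * y)) ^ 2))
        = fun s : ℝ => ((Real.exp (-(y*s)^2) : ℝ) : ℂ) from ?_]
    · exact intervalIntegral.integral_ofReal
    · funext s
      rw [show (((s:ℂ) * (Complex.I * y)) ^ 2) = ((-(y*s)^2 : ℝ) : ℂ) from ?_,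
        Complex.ofReal_exp]
      rw [show ((s:ℂ) * (Complex.I * (y:ℂ)))^2 = Complex.I^2 * ((s:ℂ)*(y:ℂ))^2 by ring,
        Complex.I_sq]
      push_cast
      ring
  have hyA : y * (∫ s in (0:ℝ)..1, Real.exp (-(y*s)^2)) = ∫ u in (0:ℝ)..y, Real.exp (-u^2) := by
    have := intervalIntegral.mul_integral_comp_mul_left (a := (0:ℝ)) (b := 1)
      (f := fun u => Real.exp (-u^2)) (c := y)
    simpa using this
  rw [faddeeva, hrhs, real_axis y hy, hA]
  have hz2 : -(Complex.I * (y:ℂ))^2 = ((y^2 : ℝ) : ℂ) := by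
    rw [show (Complex.I * (y:ℂ))^2 = Complex.I^2 * (y:ℂ)^2 by ring, Complex.I_sq]
    push_cast
    ring
  rw [hz2, ← Complex.ofReal_exp]
  set A : ℝ := ∫ s in (0:ℝ)..1, Real.exp (-(y*s)^2) with hAdef
  set B : ℝ := ∫ u in (0:ℝ)..y, Real.exp (-u^2) with hBdef
  have : Complex.I * (y:ℂ) * (A:ℂ) = Complex.I * ((y * A : ℝ) : ℂ) := by push_cast; ring
  rw [this, hyA]
  field_simp
  rw [Complex.I_sq]
  push_cast
  ring

lemma faddeeva_diff : Differentiable ℂ faddeeva := by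
  have hG : Differentiable ℂ Gfun := fun z => Gfun_diff z
  have heq : faddeeva = fun z => Complex.exp (-z^2) *
      (1 + (2 * Complex.I / (Real.sqrt Real.pi : ℂ)) * (z * Gfun z)) := rfl
  rw [heq]
  exact ((differentiable_id.pow 2).neg.cexp).mul
    ((differentiable_const _).add ((differentiable_const _).mul (differentiable_id.mul hG)))

lemma main_eq : ∀ z : ℂ, 0 < z.im →
    (Real.sqrt Real.pi : ℂ) * faddeeva z = gfun z := by
  set U : Set ℂ := {z | 0 < z.im} with hU
  have hUopen : IsOpen U := isOpen_Ioi.preimage Complex.continuous_im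
  have hUconn : IsPreconnected U := (convex_halfSpace_im_gt 0).isPreconnected
  have hf : AnalyticOnNhd ℂ (fun z => (Real.sqrt Real.pi : ℂ) * faddeeva z) U :=
    (DifferentiableOn.analyticOnNhd
      (((differentiable_const _).mul faddeeva_diff).differentiableOn) hUopen)
  have hg : AnalyticOnNhd ℂ gfun U :=
    DifferentiableOn.analyticOnNhd
      (fun z hz => (gfun_diff hz).differentiableWithinAt) hUopen
  have hI : Complex.I ∈ U := by simp [hU]
  have hfreq : ∃ᶠ z in nhdsWithin Complex.I {Complex.I}ᶜ,
      (Real.sqrt Real.pi : ℂ) * faddeeva z = gfun z := by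
    have htends : Filter.Tendsto (fun n : ℕ => Complex.I * ((1 + 1/(n+1) : ℝ) : ℂ)) Filter.atTop
        (nhdsWithin Complex.I {Complex.I}ᶜ) := by
      rw [tendsto_nhdsWithin_iff]
      constructor
      · have h1 : Filter.Tendsto (fun n : ℕ => (1 + 1/(n+1) : ℝ)) Filter.atTop (nhds 1) := by
          simpa using tendsto_const_nhds.add (tendsto_one_div_add_atTop_nhds_zero_nat (𝕜 := ℝ))
        have h2 := (Complex.continuous_ofReal.tendsto 1).comp h1
        simpa using h2.const_mul Complex.I
      · filter_upwards with n
        simp only [Set.mem_compl_iff, Set.mem_singleton_iff]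
        intro hc
        have : ((1 + 1/(n+1) : ℝ) : ℂ) = 1 := by
          have := mul_left_cancel₀ Complex.I_ne_zero (by simpa using hc)
          simpa using this
        have : (1 + 1/(n+1) : ℝ) = 1 := by exact_mod_cast this
        have hpos : (0:ℝ) < 1/(n+1) := by positivity
        linarith
    exact htends.frequently (Filter.Frequently.of_forall fun n => by
      exact axis_eq (1 + 1/(n+1)) (by positivity))
  exact fun z hz =>
    hf.eqOn_of_preconnected_of_frequently_eq hg hUconn hI hfreq hz

lemma cexp_integral_Ioi (c : ℂ) (hc : 0 < c.re) :
    ∫ s in Set.Ioi (0:ℝ), Complex.exp (-c * s) = 1 / c := by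
  have hc0 : c ≠ 0 := fun h => by simp [h] at hc
  have hderiv : ∀ s : ℝ, HasDerivAt (fun s : ℝ => -Complex.exp (-c * s) / c)
      (Complex.exp (-c * s)) s := by
    intro s
    have h1 : HasDerivAt (fun s : ℝ => -c * (s:ℂ)) (-c) s := by
      simpa using (Complex.ofRealCLM.hasDerivAt (x := s)).const_mul (-c)
    have h2 := h1.cexp
    have h3 := (h2.div_const c).neg
    have h4 : (fun s : ℝ => -Complex.exp (-c*s)/c) = fun x : ℝ => -(Complex.exp (-c*x)/c) := by
      funext t; rw [neg_div]
    rw [h4]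
    have h5 : -(Complex.exp (-c * s) * -c / c) = Complex.exp (-c * s) := by
      rw [mul_neg, neg_div, neg_neg, mul_div_cancel_right₀ _ hc0]
    rw [h5] at h3
    exact h3
  have hint : IntegrableOn (fun s : ℝ => Complex.exp (-c * s)) (Set.Ioi 0) := by
    refine Integrable.mono' (exp_neg_integrableOn_Ioi 0 hc)
      (Continuous.aestronglyMeasurable (by fun_prop)).restrict ?_
    filter_upwards with s
    rw [Complex.norm_exp]
    simp [Complex.mul_re]
  have htend : Filter.Tendsto (fun s : ℝ => -Complex.exp (-c * s) / c) Filter.atTop (nhds 0) := by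
    have h1 : Filter.Tendsto (fun s : ℝ => ‖-Complex.exp (-c * s) / c‖) Filter.atTop (nhds 0) := by
      have heq : ∀ s : ℝ, ‖-Complex.exp (-c * s) / c‖ = Real.exp (-(c.re * s)) / ‖c‖ := by
        intro s
        rw [norm_div, norm_neg, Complex.norm_exp]
        congr 2
        simp [Complex.mul_re]
      rw [show (fun s : ℝ => ‖-Complex.exp (-c * s) / c‖)
          = fun s : ℝ => Real.exp (-(c.re * s)) / ‖c‖ from funext heq]
      have h2 : Filter.Tendsto (fun s : ℝ => c.re * s) Filter.atTop Filter.atTop :=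
        Filter.Tendsto.const_mul_atTop hc Filter.tendsto_id
      have h3 := Real.tendsto_exp_neg_atTop_nhds_zero.comp h2
      simpa using h3.div_const ‖c‖
    rw [tendsto_zero_iff_norm_tendsto_zero]
    exact h1
  have := MeasureTheory.integral_Ioi_of_hasDerivAt_of_tendsto
    (f := fun s : ℝ => -Complex.exp (-c * s) / c) (a := 0)
    ((hderiv 0).continuousAt.continuousWithinAt) (fun s _ => hderiv s) hint htend
  rw [this]
  simp [neg_div, sub_neg_eq_add]

lemma laplace_cos (y u : ℝ) (hy : 0 < y) :
    ∫ s in Set.Ioi (0:ℝ), Real.exp (-(y*s)) * Real.cos (u*s) = y / (y^2 + u^2) := by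
  set c : ℂ := (y:ℂ) + (u:ℂ) * Complex.I with hc
  have hcre : c.re = y := by simp [hc]
  have hcim : c.im = u := by simp [hc]
  have hcpos : 0 < c.re := by rw [hcre]; exact hy
  have key := cexp_integral_Ioi c hcpos
  have hre : ∀ s : ℝ, (Complex.exp (-c * s)).re = Real.exp (-(y*s)) * Real.cos (u*s) := by
    intro s
    rw [Complex.exp_re]
    have h1 : (-c * (s:ℂ)).re = -(y*s) := by simp [Complex.mul_re, hcre, hcim]; try ring
    have h2 : (-c * (s:ℂ)).im = -(u*s) := by simp [Complex.mul_im, hcre, hcim]; try ring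
    rw [h1, h2, Real.cos_neg]
  have hint : IntegrableOn (fun s : ℝ => Complex.exp (-c * s)) (Set.Ioi 0) := by
    refine Integrable.mono' (exp_neg_integrableOn_Ioi 0 (by rwa [← hcre] at hy))
      (Continuous.aestronglyMeasurable (by fun_prop)).restrict ?_
    filter_upwards with s
    rw [Complex.norm_exp]
    simp [Complex.mul_re, hcre]
  calc ∫ s in Set.Ioi (0:ℝ), Real.exp (-(y*s)) * Real.cos (u*s)
      = ∫ s in Set.Ioi (0:ℝ), (Complex.exp (-c * s)).re := by
        exact MeasureTheory.setIntegral_congr_fun measurableSet_Ioi (fun s _ => (hre s).symm)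
    _ = (∫ s in Set.Ioi (0:ℝ), Complex.exp (-c * s)).re := integral_re hint
    _ = (1/c).re := by rw [key]
    _ = y / (y^2 + u^2) := by
        rw [Complex.div_re]
        simp only [Complex.normSq_apply, hcre, hcim, Complex.one_re, Complex.one_im]
        ring

lemma sqrtpi_cast : ((Real.pi:ℂ)/1) ^ (1/2 : ℂ) = ((Real.sqrt Real.pi : ℝ) : ℂ) := by
  rw [div_one]
  rw [show (1/2 : ℂ) = ((1/2 : ℝ) : ℂ) by push_cast; ring]
  rw [← Complex.ofReal_cpow Real.pi_pos.le]
  rw [Real.sqrt_eq_rpow]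

lemma gauss_cos (x s : ℝ) :
    ∫ t : ℝ, Real.exp (-t^2) * Real.cos (s*(x-t))
      = Real.sqrt Real.pi * Real.exp (-s^2/4) * Real.cos (s*x) := by
  have hb : (0:ℝ) < (1:ℂ).re := by norm_num
  have key := fourierIntegral_gaussian (b := (1:ℂ)) hb (-(s:ℂ))
  -- key : ∫ u : ℝ, cexp (I * -s * u) * cexp (-1 * u^2) = (π/1)^(1/2) * cexp (-(-s)^2/(4*1))
  have hint : Integrable (fun t : ℝ => Complex.exp (-(1:ℂ)*t^2 + (Complex.I * -(s:ℂ))*t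
      + Complex.I * s * x)) := integrable_cexp_quadratic hb _ _
  have heq : ∀ t : ℝ, Complex.exp (-(1:ℂ)*t^2 + (Complex.I * -(s:ℂ))*t + Complex.I * s * x)
      = Complex.exp (Complex.I * ((s*(x-t) : ℝ):ℂ)) * ((Real.exp (-t^2) : ℝ) : ℂ) := by
    intro t
    rw [show ((Real.exp (-t^2) : ℝ) : ℂ) = Complex.exp ((-t^2 : ℝ):ℂ) by
        rw [Complex.ofReal_exp], ← Complex.exp_add]
    congr 1
    push_cast
    ring
  have hre : ∀ t : ℝ, (Complex.exp (-(1:ℂ)*t^2 + (Complex.I * -(s:ℂ))*t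
      + Complex.I * s * x)).re = Real.exp (-t^2) * Real.cos (s*(x-t)) := by
    intro t
    rw [heq t]
    rw [show Complex.I * ((s*(x-t) : ℝ):ℂ) = ((s*(x-t) : ℝ):ℂ) * Complex.I by ring]
    rw [Complex.mul_re]
    simp only [Complex.ofReal_re, Complex.ofReal_im, Complex.exp_ofReal_mul_I_re,
      Complex.exp_ofReal_mul_I_im, mul_zero, sub_zero]
    ring
  have hval : ∫ t : ℝ, Complex.exp (-(1:ℂ)*t^2 + (Complex.I * -(s:ℂ))*t + Complex.I * s * x)
      = ((Real.sqrt Real.pi : ℝ):ℂ) * Complex.exp (-(s:ℂ)^2/4) * Complex.exp (Complex.I * s * x) := by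
    have lhs_eq : ∀ t : ℝ, Complex.exp (-(1:ℂ)*t^2 + (Complex.I * -(s:ℂ))*t + Complex.I * s * x)
        = Complex.exp (Complex.I * s * x) * (Complex.exp (Complex.I * (-(s:ℂ)) * t) * Complex.exp (-(1:ℂ)*t^2)) := by
      intro t
      rw [← Complex.exp_add, ← Complex.exp_add]
      congr 1
      ring
    rw [show (fun t : ℝ => Complex.exp (-(1:ℂ)*t^2 + (Complex.I * -(s:ℂ))*t + Complex.I * s * x))
        = fun t : ℝ => Complex.exp (Complex.I * s * x) * (Complex.exp (Complex.I * (-(s:ℂ)) * t) * Complex.exp (-(1:ℂ)*t^2)) from funext lhs_eq]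
    rw [MeasureTheory.integral_const_mul, key, sqrtpi_cast]
    rw [show (-(-(s:ℂ))^2/(4*1)) = -(s:ℂ)^2/4 by ring]
    ring
  calc ∫ t : ℝ, Real.exp (-t^2) * Real.cos (s*(x-t))
      = ∫ t : ℝ, (Complex.exp (-(1:ℂ)*t^2 + (Complex.I * -(s:ℂ))*t + Complex.I * s * x)).re := by
        exact MeasureTheory.integral_congr_ae (Filter.Eventually.of_forall fun t => (hre t).symm)
    _ = (∫ t : ℝ, Complex.exp (-(1:ℂ)*t^2 + (Complex.I * -(s:ℂ))*t + Complex.I * s * x)).re :=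
        integral_re hint
    _ = Real.sqrt Real.pi * Real.exp (-s^2/4) * Real.cos (s*x) := by
        rw [hval]
        rw [show Complex.I * (s:ℂ) * (x:ℂ) = ((s*x : ℝ):ℂ) * Complex.I by push_cast; ring]
        rw [show (-(s:ℂ)^2/4) = ((-s^2/4 : ℝ):ℂ) by push_cast; ring, ← Complex.ofReal_exp]
        rw [Complex.mul_re, Complex.mul_re]
        simp only [Complex.ofReal_re, Complex.ofReal_im, Complex.exp_ofReal_mul_I_re,
          Complex.exp_ofReal_mul_I_im, mul_zero, sub_zero, zero_mul,
          ← Complex.ofReal_mul, Complex.ofReal_im]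
        try ring

lemma re_gfun (x y : ℝ) (hy : 0 ≤ y) :
    (gfun ((x:ℂ) + Complex.I * y)).re
      = ∫ s in Set.Ioi (0:ℝ), Real.exp (-s^2/4 - y*s) * Real.cos (x*s) := by
  have him : ((x:ℂ) + Complex.I * y).im = y := by simp
  have hint := integrable_g ((x:ℂ) + Complex.I * (y:ℂ)) (by rw [him]; exact hy)
  have h0 := integral_re (μ := volume.restrict (Set.Ioi 0)) hint
  simp only [RCLike.re_to_complex] at h0
  rw [gfun, ← h0]
  apply MeasureTheory.setIntegral_congr_fun measurableSet_Ioi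
  intro s _
  dsimp only
  rw [Complex.exp_re]
  have h1 : (-(s:ℂ)^2/4 + Complex.I * ((x:ℂ) + Complex.I * y) * s).re = -s^2/4 - y*s := by
    rw [re_aux, him]
  have h2 : (-(s:ℂ)^2/4 + Complex.I * ((x:ℂ) + Complex.I * y) * s).im = x*s := by
    simp [Complex.add_im, Complex.mul_im, Complex.mul_re, ← Complex.ofReal_pow]
  rw [h1, h2]

lemma voigt_eq (x y : ℝ) (hy : 0 < y) :
    (1/Real.sqrt Real.pi) * ∫ s in Set.Ioi (0:ℝ), Real.exp (-s^2/4 - y*s) * Real.cos (x*s)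
      = (y / Real.pi) * ∫ t : ℝ, Real.exp (-t^2) / (y^2 + (x - t)^2) := by
  have hπ : (0:ℝ) < Real.sqrt Real.pi := Real.sqrt_pos.2 Real.pi_pos
  have step1 : ∫ s in Set.Ioi (0:ℝ), Real.exp (-s^2/4 - y*s) * Real.cos (x*s)
      = (1/Real.sqrt Real.pi) * ∫ s in Set.Ioi (0:ℝ),
          (∫ t : ℝ, Real.exp (-(y*s)) * (Real.exp (-t^2) * Real.cos (s*(x-t)))) := by
    rw [← MeasureTheory.integral_const_mul]
    apply MeasureTheory.setIntegral_congr_fun measurableSet_Ioi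
    intro s _
    dsimp only
    rw [MeasureTheory.integral_const_mul, gauss_cos x s]
    rw [show Real.cos (s*x) = Real.cos (x*s) from by rw [mul_comm]]
    rw [show (-s^2/4 - y*s : ℝ) = -(y*s) + -s^2/4 from by ring, Real.exp_add]
    field_simp
  have hswap : ∫ s in Set.Ioi (0:ℝ),
        (∫ t : ℝ, Real.exp (-(y*s)) * (Real.exp (-t^2) * Real.cos (s*(x-t))))
      = ∫ t : ℝ, (∫ s in Set.Ioi (0:ℝ), Real.exp (-(y*s)) * (Real.exp (-t^2) * Real.cos (s*(x-t)))) := by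
    apply MeasureTheory.integral_integral_swap
    have hG : Integrable (fun p : ℝ × ℝ => Real.exp (-(y*p.1)) * Real.exp (-p.2^2))
        ((volume.restrict (Set.Ioi 0)).prod volume) := by
      have h1 : Integrable (fun s : ℝ => Real.exp (-(y*s))) (volume.restrict (Set.Ioi 0)) := by
        have := exp_neg_integrableOn_Ioi 0 hy
        simp only [neg_mul] at this
        exact this
      have h2 : Integrable (fun t : ℝ => Real.exp (-t^2)) := by
        simpa using integrable_exp_neg_mul_sq one_pos
      exact h1.mul_prod h2
    refine hG.mono' (Continuous.aestronglyMeasurable (by fun_prop)) ?_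
    filter_upwards with p
    rw [Function.uncurry_apply_pair, Real.norm_eq_abs, abs_mul, abs_mul,
      Real.abs_exp, Real.abs_exp]
    have h1 : |Real.cos (p.1*(x-p.2))| ≤ 1 := Real.abs_cos_le_one _
    calc Real.exp (-(y*p.1)) * (Real.exp (-p.2^2) * |Real.cos (p.1*(x-p.2))|)
        ≤ Real.exp (-(y*p.1)) * (Real.exp (-p.2^2) * 1) := by
          apply mul_le_mul_of_nonneg_left _ (Real.exp_pos _).le
          exact mul_le_mul_of_nonneg_left h1 (Real.exp_pos _).le
      _ = Real.exp (-(y*p.1)) * Real.exp (-p.2^2) := by ring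
  have step3 : ∫ t : ℝ, (∫ s in Set.Ioi (0:ℝ), Real.exp (-(y*s)) * (Real.exp (-t^2) * Real.cos (s*(x-t))))
      = ∫ t : ℝ, Real.exp (-t^2) * (y / (y^2 + (x-t)^2)) := by
    congr 1
    funext t
    rw [show (fun s => Real.exp (-(y*s)) * (Real.exp (-t^2) * Real.cos (s*(x-t))))
        = fun s => Real.exp (-t^2) * (Real.exp (-(y*s)) * Real.cos ((x-t)*s)) from ?_]
    · rw [MeasureTheory.integral_const_mul, laplace_cos y (x-t) hy]
    · funext s
      rw [show s*(x-t) = (x-t)*s by ring]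
      ring
  rw [step1, hswap, step3]
  rw [show (fun t => Real.exp (-t^2) * (y / (y^2 + (x-t)^2)))
      = fun t => y * (Real.exp (-t^2) / (y^2 + (x-t)^2)) from funext fun t => by ring]
  rw [MeasureTheory.integral_const_mul]
  rw [show (1:ℝ)/Real.sqrt Real.pi * ((1:ℝ)/Real.sqrt Real.pi
      * (y * ∫ t : ℝ, Real.exp (-t^2) / (y^2 + (x-t)^2)))
      = (1/(Real.sqrt Real.pi * Real.sqrt Real.pi)) * (y * ∫ t : ℝ, Real.exp (-t^2) / (y^2 + (x-t)^2)) from by ring]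
  rw [Real.mul_self_sqrt Real.pi_pos.le]
  ring


/-- For all real `x` and real `y > 0`, the real part of the complex error
function at `z = x + iy` equals the Voigt function:
`Re[w(x + iy)] = (y/π) ∫_{−∞}^{∞} e^{−t²}/(y² + (x − t)²) dt`. -/
theorem re_faddeeva_eq_voigt (x y : ℝ) (hy : 0 < y) :
    (faddeeva ((x : ℂ) + Complex.I * (y : ℂ))).re =
      (y / Real.pi) * ∫ t : ℝ, Real.exp (-t ^ 2) / (y ^ 2 + (x - t) ^ 2) := by
  have hπ : (0:ℝ) < Real.sqrt Real.pi := Real.sqrt_pos.2 Real.pi_pos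
  have hπ' : (Real.sqrt Real.pi : ℂ) ≠ 0 := by exact_mod_cast hπ.ne'
  have hz : (0:ℝ) < ((x:ℂ) + Complex.I * y).im := by simpa using hy
  have hmain := main_eq _ hz
  have hfad : faddeeva ((x:ℂ) + Complex.I * y)
      = gfun ((x:ℂ) + Complex.I * y) / (Real.sqrt Real.pi : ℂ) := by
    rw [eq_div_iff hπ', ← hmain]
    ring
  rw [hfad, Complex.div_ofReal_re, re_gfun x y hy.le]
  rw [show (∫ s in Set.Ioi (0:ℝ), Real.exp (-s^2/4 - y*s) * Real.cos (x*s)) / Real.sqrt Real.pi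
      = (1/Real.sqrt Real.pi)
        * ∫ s in Set.Ioi (0:ℝ), Real.exp (-s^2/4 - y*s) * Real.cos (x*s) from by ring]
  exact voigt_eq x y hy
end

section
/- For every real x, the complex probability function W(x,y) = (i/π) ∫_{−∞}^{∞} e^{−t²}/((x + iy) − t) dt tends, as y → 0⁺, to e^{−x²} + (2i/√π)·daw(x), where daw is Dawson's integral. -/
open Real MeasureTheory Filter

/-- Dawson's integral for real `x`: `daw(x) = e^{−x²} ∫₀^x e^{t²} dt`. -/
noncomputable def dawson (x : ℝ) : ℝ :=
  Real.exp (-x ^ 2) * ∫ t in (0:ℝ)..x, Real.exp (t ^ 2)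

section Aux
open Set

lemma integral_gauss : ∫ u : ℝ, exp (-u^2) = Real.sqrt π := by
  simpa using integral_gaussian 1

lemma integrable_gauss : Integrable fun u : ℝ => exp (-u^2) := by
  simpa using integrable_exp_neg_mul_sq one_pos

lemma integrable_gauss_shift (a : ℝ) : Integrable fun u : ℝ => exp (-(u - a)^2) :=
  integrable_gauss.comp_sub_right a

lemma integral_gauss_shift (a : ℝ) : ∫ u : ℝ, exp (-(u - a)^2) = Real.sqrt π := by
  rw [integral_sub_right_eq_self (fun u : ℝ => exp (-u^2)) a, integral_gauss]

lemma sinh_le_mul_cosh {t : ℝ} (ht : 0 ≤ t) : Real.sinh t ≤ t * Real.cosh t := by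
  have key : ∀ s : ℝ,
      HasDerivAt (fun r => r * Real.cosh r - Real.sinh r) (s * Real.sinh s) s := by
    intro s
    have h1 := ((hasDerivAt_id s).mul (Real.hasDerivAt_cosh s)).sub (Real.hasDerivAt_sinh s)
    refine h1.congr_deriv ?_
    simp only [id]; ring
  have hmono : MonotoneOn (fun r => r * Real.cosh r - Real.sinh r) (Set.Ici (0:ℝ)) := by
    apply monotoneOn_of_deriv_nonneg (convex_Ici 0)
    · exact Continuous.continuousOn (by continuity)
    · intro s hs
      exact (key s).differentiableAt.differentiableWithinAt
    · intro s hs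
      rw [interior_Ici] at hs
      rw [(key s).deriv]
      exact mul_nonneg hs.le (Real.sinh_nonneg_iff.2 hs.le)
  have h0 := hmono (Set.self_mem_Ici) ht ht
  simp at h0
  linarith

lemma abs_sinh_div_le (x u : ℝ) (hu : 0 < u) :
    |Real.sinh (2*x*u)| / u ≤ 2*|x| * Real.cosh (2*x*u) := by
  rw [Real.abs_sinh, div_le_iff₀ hu]
  have h1 : |2*x*u| = (2*|x|) * u := by
    rw [abs_mul, abs_mul, abs_of_pos hu, abs_two]
  have h2 := sinh_le_mul_cosh (t := |2*x*u|) (abs_nonneg _)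
  rw [Real.cosh_abs] at h2
  calc Real.sinh |2*x*u| ≤ |2*x*u| * Real.cosh (2*x*u) := h2
    _ = 2*|x| * Real.cosh (2*x*u) * u := by rw [h1]; ring

lemma gauss_cosh_eq (c : ℝ) (u : ℝ) : exp (-u^2) * Real.cosh (c*u)
    = (exp (c^2/4) * exp (-(u - c/2)^2) + exp (c^2/4) * exp (-(u - (-(c/2)))^2)) / 2 := by
  rw [Real.cosh_eq, ← Real.exp_add, ← Real.exp_add,
    show c^2/4 + -(u - c/2)^2 = -u^2 + c*u by ring,
    show c^2/4 + -(u - -(c/2))^2 = -u^2 + -(c*u) by ring,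
    Real.exp_add, Real.exp_add]
  ring

lemma integrable_gauss_cosh (c : ℝ) :
    Integrable fun u : ℝ => exp (-u^2) * Real.cosh (c*u) := by
  have h : (fun u : ℝ => exp (-u^2) * Real.cosh (c*u))
      = fun u => (exp (c^2/4) * exp (-(u - c/2)^2) + exp (c^2/4) * exp (-(u - (-(c/2)))^2)) / 2 :=
    funext (gauss_cosh_eq c)
  rw [h]
  exact (((integrable_gauss_shift (c/2)).const_mul _).add
    ((integrable_gauss_shift (-(c/2))).const_mul _)).div_const 2

lemma integrable_gauss_shift' (s : ℝ) : Integrable (fun u : ℝ => exp (-(u + s)^2)) := by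
  simpa [sub_neg_eq_add] using integrable_gauss_shift (-s)

lemma inner_gauss (s : ℝ) :
    ∫ u in Ioi (0:ℝ), exp (-u^2) * (2 * Real.cosh (2*s*u)) = Real.sqrt π * exp (s^2) := by
  have h : ∀ u : ℝ, exp (-u^2) * (2 * Real.cosh (2*s*u))
      = exp (s^2) * exp (-(u - s)^2) + exp (s^2) * exp (-(u + s)^2) := by
    intro u
    rw [Real.cosh_eq, ← Real.exp_add, ← Real.exp_add,
      show s^2 + -(u - s)^2 = -u^2 + 2*s*u by ring,
      show s^2 + -(u + s)^2 = -u^2 + -(2*s*u) by ring,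
      Real.exp_add, Real.exp_add]
    ring
  simp_rw [h]
  rw [integral_add ((integrable_gauss_shift s).const_mul _).integrableOn
    ((integrable_gauss_shift' s).const_mul _).integrableOn]
  rw [integral_const_mul, integral_const_mul]
  have h2 : ∫ u in Ioi (0:ℝ), exp (-(u + s)^2) = ∫ u in Iic (0:ℝ), exp (-(u - s)^2) := by
    have h0 := integral_comp_neg_Ioi (0:ℝ) (fun v => exp (-(v - s)^2))
    rw [neg_zero] at h0
    rw [← h0]
    exact setIntegral_congr_fun measurableSet_Ioi fun u _ => by congr 1; ring
  rw [h2, ← mul_add, mul_comm (Real.sqrt π)]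
  congr 1
  rw [add_comm, intervalIntegral.integral_Iic_add_Ioi ((integrable_gauss_shift s)).integrableOn
    ((integrable_gauss_shift s)).integrableOn]
  exact integral_gauss_shift s

lemma K_meas (x : ℝ) : AEStronglyMeasurable
    (fun u : ℝ => exp (-u^2) * (Real.sinh (2*x*u) / u)) (volume.restrict (Ioi 0)) := by
  apply Measurable.aestronglyMeasurable
  fun_prop

lemma K_int (x : ℝ) : Integrable
    (fun u : ℝ => exp (-u^2) * (Real.sinh (2*x*u) / u)) (volume.restrict (Ioi 0)) := by
  apply Integrable.mono' (((integrable_gauss_cosh (2*x)).const_mul (2*|x|)).integrableOn) (K_meas x)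
  rw [ae_restrict_iff' measurableSet_Ioi]
  refine Eventually.of_forall fun u hu => ?_
  have hu : (0:ℝ) < u := hu
  rw [Real.norm_eq_abs, abs_mul, abs_div, abs_of_pos hu, abs_of_pos (exp_pos _)]
  calc exp (-u^2) * (|Real.sinh (2*x*u)| / u)
      ≤ exp (-u^2) * (2*|x| * Real.cosh (2*x*u)) := by
        apply mul_le_mul_of_nonneg_left (abs_sinh_div_le x u hu) (exp_pos _).le
    _ = 2*|x| * (exp (-u^2) * Real.cosh (2*x*u)) := by ring

lemma K_hasDeriv (x₀ : ℝ) :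
    HasDerivAt (fun x : ℝ => ∫ u in Ioi (0:ℝ), exp (-u^2) * (Real.sinh (2*x*u) / u))
      (Real.sqrt π * exp (x₀^2)) x₀ := by
  have key := hasDerivAt_integral_of_dominated_loc_of_deriv_le
    (μ := volume.restrict (Ioi (0:ℝ)))
    (F := fun (x : ℝ) (u : ℝ) => exp (-u^2) * (Real.sinh (2*x*u) / u))
    (F' := fun (x : ℝ) (u : ℝ) => exp (-u^2) * (2 * Real.cosh (2*x*u)))
    (x₀ := x₀)
    (bound := fun u => 2 * (exp (-u^2) * Real.cosh (2*(|x₀|+1)*u)))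
    (Metric.ball_mem_nhds x₀ one_pos) (Eventually.of_forall fun x => K_meas x) (K_int x₀)
    (Measurable.aestronglyMeasurable (by fun_prop)) ?bound
    (((integrable_gauss_cosh (2*(|x₀|+1))).const_mul 2).integrableOn) ?diff
  case bound =>
    rw [ae_restrict_iff' measurableSet_Ioi]
    refine Eventually.of_forall fun u hu => ?_
    have hu : (0:ℝ) < u := hu
    intro x hx
    have hxb : |x| ≤ |x₀| + 1 := by
      have := abs_sub_abs_le_abs_sub x x₀
      have h2 : |x - x₀| < 1 := by simpa [Real.dist_eq] using hx
      linarith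
    rw [Real.norm_eq_abs, abs_mul, abs_of_pos (exp_pos _),
      abs_of_pos (by positivity : (0:ℝ) < 2 * Real.cosh (2*x*u))]
    have hc : Real.cosh (2*x*u) ≤ Real.cosh (2*(|x₀|+1)*u) := by
      rw [Real.cosh_le_cosh]
      rw [abs_mul, abs_mul, abs_mul, abs_mul, abs_two, abs_of_pos hu,
        abs_of_nonneg (by positivity : (0:ℝ) ≤ |x₀|+1)]
      nlinarith [abs_nonneg x, hu.le]
    beta_reduce
    linarith [mul_le_mul_of_nonneg_left hc (exp_pos (-u^2)).le]
  case diff =>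
    rw [ae_restrict_iff' measurableSet_Ioi]
    refine Eventually.of_forall fun u hu => ?_
    have hu : (0:ℝ) < u := hu
    intro x _
    have h1 : HasDerivAt (fun x : ℝ => 2*x*u) (2*u) x := by
      simpa using ((hasDerivAt_id x).const_mul 2).mul_const u
    have h3 := (h1.sinh.div_const u).const_mul (exp (-u^2))
    refine h3.congr_deriv ?_
    field_simp
  have := key.2
  rwa [show (∫ u in Ioi (0:ℝ), exp (-u^2) * (2 * Real.cosh (2*x₀*u))) = Real.sqrt π * exp (x₀^2)
    from inner_gauss x₀] at this

lemma K_eq (x : ℝ) : ∫ u in Ioi (0:ℝ), exp (-u^2) * (Real.sinh (2*x*u) / u)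
    = Real.sqrt π * ∫ s in (0:ℝ)..x, exp (s^2) := by
  have h := intervalIntegral.integral_eq_sub_of_hasDerivAt
    (f := fun x : ℝ => ∫ u in Ioi (0:ℝ), exp (-u^2) * (Real.sinh (2*x*u) / u))
    (f' := fun s : ℝ => Real.sqrt π * exp (s^2)) (a := 0) (b := x)
    (fun t _ => K_hasDeriv t)
    (Continuous.intervalIntegrable (by continuity) 0 x)
  beta_reduce at h
  have h0 : (∫ u in Ioi (0:ℝ), exp (-u^2) * (Real.sinh (2*(0:ℝ)*u) / u)) = 0 := by
    simp
  rw [h0, sub_zero] at h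
  rw [← h, intervalIntegral.integral_const_mul]

lemma integral_odd_zero {f : ℝ → ℝ} (hf : ∀ u, f (-u) = - f u) : ∫ u : ℝ, f u = 0 := by
  have h1 := integral_neg_eq_self f (volume : Measure ℝ)
  simp_rw [hf] at h1
  rw [integral_neg] at h1
  linarith

lemma integral_even_eq {f : ℝ → ℝ} (hf : ∀ u, f (-u) = f u) (hi : Integrable f) :
    ∫ u : ℝ, f u = 2 * ∫ u in Ioi (0:ℝ), f u := by
  have h2 : ∫ u in Iic (0:ℝ), f u = ∫ u in Ioi (0:ℝ), f u := by
    have h0 := integral_comp_neg_Ioi (0:ℝ) f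
    rw [neg_zero] at h0
    rw [← h0]
    exact setIntegral_congr_fun measurableSet_Ioi fun u _ => (hf u)
  rw [← intervalIntegral.integral_Iic_add_Ioi hi.integrableOn hi.integrableOn, h2]
  ring

lemma abs_sinh_le_cosh (t : ℝ) : |Real.sinh t| ≤ Real.cosh t := by
  rw [Real.abs_sinh, ← Real.cosh_abs]
  nlinarith [Real.cosh_sub_sinh |t|, Real.exp_pos (-|t|)]

lemma integral_comp_sub_left' (f : ℝ → ℝ) (a : ℝ) : ∫ u : ℝ, f (a - u) = ∫ t : ℝ, f t := by
  exact integral_sub_left_eq_self f volume a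

lemma abs_q_le (u y : ℝ) (hy : 0 < y) : |u/(u^2+y^2)| ≤ 1/(2*y) := by
  rw [abs_div, abs_of_pos (by positivity : (0:ℝ) < u^2+y^2), div_le_div_iff₀ (by positivity) (by positivity)]
  nlinarith [sq_nonneg (|u| - y), sq_abs u]

lemma int_aux_cosh (x : ℝ) {y : ℝ} (hy : 0 < y) :
    Integrable (fun u : ℝ => exp (-x^2) * (exp (-u^2) * Real.cosh (2*x*u)) * (u/(u^2+y^2))) := by
  apply Integrable.mono'
    ((integrable_gauss_cosh (2*x)).const_mul (exp (-x^2) * (1/(2*y))))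
    (Measurable.aestronglyMeasurable (by fun_prop))
  refine Eventually.of_forall fun u => ?_
  rw [Real.norm_eq_abs, abs_mul, abs_of_pos (by positivity : (0:ℝ) < exp (-x^2) * (exp (-u^2) * Real.cosh (2*x*u)))]
  calc exp (-x^2) * (exp (-u^2) * Real.cosh (2*x*u)) * |u/(u^2+y^2)|
      ≤ exp (-x^2) * (exp (-u^2) * Real.cosh (2*x*u)) * (1/(2*y)) := by
        apply mul_le_mul_of_nonneg_left (abs_q_le u y hy) (by positivity)
    _ = exp (-x^2) * (1/(2*y)) * (exp (-u^2) * Real.cosh (2*x*u)) := by ring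

lemma int_aux_sinh (x : ℝ) {y : ℝ} (hy : 0 < y) :
    Integrable (fun u : ℝ => exp (-x^2) * (exp (-u^2) * Real.sinh (2*x*u)) * (u/(u^2+y^2))) := by
  apply Integrable.mono'
    ((integrable_gauss_cosh (2*x)).const_mul (exp (-x^2) * (1/(2*y))))
    (Measurable.aestronglyMeasurable (by fun_prop))
  refine Eventually.of_forall fun u => ?_
  rw [Real.norm_eq_abs, abs_mul, abs_mul, abs_mul, abs_of_pos (exp_pos _), abs_of_pos (exp_pos _)]
  calc exp (-x^2) * (exp (-u^2) * |Real.sinh (2*x*u)|) * |u/(u^2+y^2)|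
      ≤ exp (-x^2) * (exp (-u^2) * Real.cosh (2*x*u)) * (1/(2*y)) := by
        apply mul_le_mul (mul_le_mul_of_nonneg_left
          (mul_le_mul_of_nonneg_left (abs_sinh_le_cosh _) (exp_pos _).le) (exp_pos _).le)
          (abs_q_le u y hy) (abs_nonneg _) (by positivity)
    _ = exp (-x^2) * (1/(2*y)) * (exp (-u^2) * Real.cosh (2*x*u)) := by ring

lemma A_eq (x : ℝ) {y : ℝ} (hy : 0 < y) :
    (∫ t : ℝ, exp (-t^2) * ((x - t)/((x - t)^2 + y^2)))
      = 2 * ∫ u in Ioi (0:ℝ), exp (-x^2) * (exp (-u^2) * Real.sinh (2*x*u)) * (u/(u^2 + y^2)) := by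
  have e1 : (∫ u : ℝ, exp (-(x-u)^2) * ((x-(x-u))/((x-(x-u))^2 + y^2)))
      = ∫ t : ℝ, exp (-t^2) * ((x - t)/((x - t)^2 + y^2)) :=
    integral_comp_sub_left' (fun t => exp (-t^2) * ((x - t)/((x - t)^2 + y^2))) x
  rw [← e1]
  have hpt : ∀ u : ℝ, exp (-(x-u)^2) * ((x-(x-u))/((x-(x-u))^2 + y^2))
      = (exp (-x^2) * (exp (-u^2) * Real.cosh (2*x*u)) * (u/(u^2+y^2)))
        + (exp (-x^2) * (exp (-u^2) * Real.sinh (2*x*u)) * (u/(u^2+y^2))) := by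
    intro u
    have hexp : exp (-(x-u)^2) = exp (-x^2) * exp (-u^2) * Real.exp (2*x*u) := by
      rw [← Real.exp_add, ← Real.exp_add]; congr 1; ring
    rw [show x-(x-u) = u by ring, hexp,
      show Real.exp (2*x*u) = Real.cosh (2*x*u) + Real.sinh (2*x*u) from (Real.cosh_add_sinh _).symm]
    ring
  simp_rw [hpt]
  rw [integral_add (int_aux_cosh x hy) (int_aux_sinh x hy)]
  have hodd : (∫ u : ℝ, exp (-x^2) * (exp (-u^2) * Real.cosh (2*x*u)) * (u/(u^2+y^2))) = 0 := by
    apply integral_odd_zero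
    intro u
    beta_reduce
    rw [show 2*x*(-u) = -(2*x*u) by ring, Real.cosh_neg, show (-u)^2 = u^2 by ring]
    ring
  have heven := integral_even_eq (f := fun u : ℝ =>
      exp (-x^2) * (exp (-u^2) * Real.sinh (2*x*u)) * (u/(u^2+y^2))) ?_ (int_aux_sinh x hy)
  · rw [hodd, heven, zero_add]
  · intro u
    beta_reduce
    rw [show 2*x*(-u) = -(2*x*u) by ring, Real.sinh_neg, show (-u)^2 = u^2 by ring]
    ring

lemma A_tendsto (x : ℝ) :
    Tendsto (fun y : ℝ => ∫ u in Ioi (0:ℝ),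
        exp (-x^2) * (exp (-u^2) * Real.sinh (2*x*u)) * (u/(u^2+y^2)))
      (nhdsWithin 0 (Set.Ioi 0))
      (nhds (exp (-x^2) * (Real.sqrt π * ∫ s in (0:ℝ)..x, exp (s^2)))) := by
  have key : Tendsto (fun y : ℝ => ∫ u in Ioi (0:ℝ),
        exp (-x^2) * (exp (-u^2) * Real.sinh (2*x*u)) * (u/(u^2+y^2)))
      (nhdsWithin 0 (Set.Ioi 0))
      (nhds (∫ u in Ioi (0:ℝ), exp (-x^2) * (exp (-u^2) * (Real.sinh (2*x*u) / u)))) := by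
    apply tendsto_integral_filter_of_dominated_convergence
      (bound := fun u => exp (-x^2) * (2*|x| * (exp (-u^2) * Real.cosh (2*x*u))))
    · exact Eventually.of_forall fun y => Measurable.aestronglyMeasurable (by fun_prop)
    · refine Eventually.of_forall fun y => ?_
      rw [ae_restrict_iff' measurableSet_Ioi]
      refine Eventually.of_forall fun u hu => ?_
      have hu : (0:ℝ) < u := hu
      rw [Real.norm_eq_abs, abs_mul, abs_mul, abs_mul, abs_of_pos (exp_pos _), abs_of_pos (exp_pos _)]
      have h1 : |u/(u^2+y^2)| ≤ 1/u := by
        rw [abs_div, abs_of_pos (by positivity : (0:ℝ) < u^2+y^2), abs_of_pos hu,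
          div_le_div_iff₀ (by positivity) hu]
        nlinarith [sq_nonneg y]
      calc exp (-x^2) * (exp (-u^2) * |Real.sinh (2*x*u)|) * |u/(u^2+y^2)|
          ≤ exp (-x^2) * (exp (-u^2) * |Real.sinh (2*x*u)|) * (1/u) := by
            apply mul_le_mul_of_nonneg_left h1 (by positivity)
        _ = exp (-x^2) * (exp (-u^2) * (|Real.sinh (2*x*u)| / u)) := by ring
        _ ≤ exp (-x^2) * (exp (-u^2) * (2*|x| * Real.cosh (2*x*u))) := by
            apply mul_le_mul_of_nonneg_left
              (mul_le_mul_of_nonneg_left (abs_sinh_div_le x u hu) (exp_pos _).le) (exp_pos _).le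
        _ = exp (-x^2) * (2*|x| * (exp (-u^2) * Real.cosh (2*x*u))) := by ring
    · exact (((integrable_gauss_cosh (2*x)).const_mul _).const_mul _).integrableOn
    · rw [ae_restrict_iff' measurableSet_Ioi]
      refine Eventually.of_forall fun u hu => ?_
      have hu : (0:ℝ) < u := hu
      have hc : ContinuousAt (fun y : ℝ =>
          exp (-x^2) * (exp (-u^2) * Real.sinh (2*x*u)) * (u/(u^2+y^2))) 0 := by
        apply ContinuousAt.mul continuousAt_const
        exact ContinuousAt.div continuousAt_const (by fun_prop) (by positivity)
      have hv : exp (-x^2) * (exp (-u^2) * (Real.sinh (2*x*u) / u))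
          = exp (-x^2) * (exp (-u^2) * Real.sinh (2*x*u)) * (u/(u^2+(0:ℝ)^2)) := by
        rw [show u^2+(0:ℝ)^2 = u^2 by ring]
        field_simp
      rw [hv]
      exact hc.tendsto.mono_left nhdsWithin_le_nhds
  have hval : (∫ u in Ioi (0:ℝ), exp (-x^2) * (exp (-u^2) * (Real.sinh (2*x*u) / u)))
      = exp (-x^2) * (Real.sqrt π * ∫ s in (0:ℝ)..x, exp (s^2)) := by
    rw [integral_const_mul, K_eq]
  rwa [hval] at key

lemma B_eq (x : ℝ) {y : ℝ} (hy : 0 < y) :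
    (∫ t : ℝ, exp (-t^2) * (y/((x - t)^2 + y^2)))
      = ∫ s : ℝ, exp (-(x + y*s)^2) * (1+s^2)⁻¹ := by
  set g : ℝ → ℝ := fun v => exp (-(x+v)^2) * (y/((x-(x+v))^2+y^2)) with hg
  have e1 : ∫ v : ℝ, g v = ∫ t : ℝ, exp (-t^2) * (y/((x - t)^2 + y^2)) :=
    integral_add_left_eq_self (fun t => exp (-t^2) * (y/((x - t)^2 + y^2))) x
  have e2 : ∫ s : ℝ, g (y*s) = |y⁻¹| • ∫ v : ℝ, g v := Measure.integral_comp_mul_left g y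
  have e3 : ∀ s : ℝ, g (y*s) = y⁻¹ * (exp (-(x+y*s)^2) * (1+s^2)⁻¹) := by
    intro s
    show exp (-(x+y*s)^2) * (y/((x-(x+y*s))^2+y^2)) = _
    rw [show (x-(x+y*s))^2 + y^2 = y^2*(1+s^2) by ring]
    rw [show y/(y^2*(1+s^2)) = y⁻¹ * (1+s^2)⁻¹ by field_simp]
    ring
  have e4 : ∫ s : ℝ, g (y*s) = y⁻¹ * ∫ s : ℝ, exp (-(x + y*s)^2) * (1+s^2)⁻¹ := by
    simp_rw [e3]; exact integral_const_mul _ _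
  rw [e1] at e2
  rw [e4, abs_of_pos (inv_pos.2 hy), smul_eq_mul] at e2
  exact (mul_left_cancel₀ (inv_ne_zero hy.ne') e2).symm

lemma B_tendsto (x : ℝ) :
    Tendsto (fun y : ℝ => ∫ s : ℝ, exp (-(x + y*s)^2) * (1+s^2)⁻¹)
      (nhdsWithin 0 (Set.Ioi 0)) (nhds (π * exp (-x^2))) := by
  have key : Tendsto (fun y : ℝ => ∫ s : ℝ, exp (-(x + y*s)^2) * (1+s^2)⁻¹)
      (nhdsWithin 0 (Set.Ioi 0)) (nhds (∫ s : ℝ, exp (-x^2) * (1+s^2)⁻¹)) := by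
    apply tendsto_integral_filter_of_dominated_convergence (bound := fun s => (1+s^2)⁻¹)
    · exact Eventually.of_forall fun y => Measurable.aestronglyMeasurable (by fun_prop)
    · refine Eventually.of_forall fun y => Eventually.of_forall fun s => ?_
      rw [Real.norm_eq_abs, abs_mul, abs_of_pos (exp_pos _),
        abs_of_pos (by positivity : (0:ℝ) < (1+s^2)⁻¹)]
      have h1 : exp (-(x + y*s)^2) ≤ 1 := Real.exp_le_one_iff.2 (neg_nonpos.2 (sq_nonneg _))
      calc exp (-(x + y*s)^2) * (1+s^2)⁻¹ ≤ 1 * (1+s^2)⁻¹ :=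
            mul_le_mul_of_nonneg_right h1 (by positivity)
        _ = (1+s^2)⁻¹ := one_mul _
    · exact integrable_inv_one_add_sq
    · refine Eventually.of_forall fun s => ?_
      have hc : ContinuousAt (fun y : ℝ => exp (-(x + y*s)^2) * (1+s^2)⁻¹) 0 := by fun_prop
      have hv : exp (-x^2) * (1+s^2)⁻¹ = exp (-(x + (0:ℝ)*s)^2) * (1+s^2)⁻¹ := by norm_num
      rw [hv]
      exact hc.tendsto.mono_left nhdsWithin_le_nhds
  have hval : (∫ s : ℝ, exp (-x^2) * (1+s^2)⁻¹) = π * exp (-x^2) := by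
    rw [integral_const_mul, integral_univ_inv_one_add_sq]
    ring
  rwa [hval] at key

lemma integrand_decomp (x y t : ℝ) (hy : 0 < y) :
    Complex.exp (-(t:ℂ)^2) / (((x:ℂ) + Complex.I*(y:ℂ)) - (t:ℂ))
      = ((exp (-t^2) * ((x-t)/((x-t)^2+y^2)) : ℝ) : ℂ)
        - Complex.I * ((exp (-t^2) * (y/((x-t)^2+y^2)) : ℝ) : ℂ) := by
  have hd : (0:ℝ) < (x-t)^2 + y^2 := by positivity
  have hz : ((x:ℂ) + Complex.I*(y:ℂ)) - (t:ℂ) ≠ 0 := by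
    intro h
    have him := congrArg Complex.im h
    simp at him
    exact hy.ne' him
  rw [div_eq_iff hz]
  have he : Complex.exp (-(t:ℂ)^2) = ((exp (-t^2) : ℝ) : ℂ) := by
    rw [Complex.ofReal_exp]
    push_cast
    ring_nf
  rw [he]
  have hdc : (((x:ℂ)-t)^2+(y:ℂ)^2) ≠ 0 := by
    have : ((((x-t)^2+y^2 : ℝ)) : ℂ) ≠ 0 := Complex.ofReal_ne_zero.2 hd.ne'
    push_cast at this
    convert this using 2
  push_cast
  field_simp
  ring_nf
  rw [Complex.I_sq]
  ring

lemma int_p (x : ℝ) {y : ℝ} (hy : 0 < y) :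
    Integrable (fun t : ℝ => exp (-t^2) * ((x-t)/((x-t)^2+y^2))) := by
  apply Integrable.mono' (integrable_gauss.const_mul (1/(2*y)))
    (Measurable.aestronglyMeasurable (by fun_prop))
  refine Eventually.of_forall fun t => ?_
  rw [Real.norm_eq_abs, abs_mul, abs_of_pos (exp_pos _)]
  calc exp (-t^2) * |(x-t)/((x-t)^2+y^2)| ≤ exp (-t^2) * (1/(2*y)) :=
        mul_le_mul_of_nonneg_left (abs_q_le (x-t) y hy) (exp_pos _).le
    _ = 1/(2*y) * exp (-t^2) := by ring

lemma int_q (x : ℝ) {y : ℝ} (hy : 0 < y) :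
    Integrable (fun t : ℝ => exp (-t^2) * (y/((x-t)^2+y^2))) := by
  apply Integrable.mono' (integrable_gauss.const_mul (1/y))
    (Measurable.aestronglyMeasurable (by fun_prop))
  refine Eventually.of_forall fun t => ?_
  rw [Real.norm_eq_abs, abs_mul, abs_of_pos (exp_pos _),
    abs_of_pos (by positivity : (0:ℝ) < y/((x-t)^2+y^2))]
  have h1 : y/((x-t)^2+y^2) ≤ 1/y := by
    rw [div_le_div_iff₀ (by positivity) hy]
    nlinarith [sq_nonneg (x-t)]
  calc exp (-t^2) * (y/((x-t)^2+y^2)) ≤ exp (-t^2) * (1/y) :=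
        mul_le_mul_of_nonneg_left h1 (exp_pos _).le
    _ = 1/y * exp (-t^2) := by ring

lemma integral_decomp (x : ℝ) {y : ℝ} (hy : 0 < y) :
    (∫ t : ℝ, Complex.exp (-(t:ℂ)^2) / (((x:ℂ) + Complex.I*(y:ℂ)) - (t:ℂ)))
      = ((∫ t : ℝ, exp (-t^2) * ((x-t)/((x-t)^2+y^2)) : ℝ) : ℂ)
        - Complex.I * ((∫ t : ℝ, exp (-t^2) * (y/((x-t)^2+y^2)) : ℝ) : ℂ) := by
  rw [show (fun t : ℝ => Complex.exp (-(t:ℂ)^2) / (((x:ℂ) + Complex.I*(y:ℂ)) - (t:ℂ)))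
      = fun t : ℝ => ((exp (-t^2) * ((x-t)/((x-t)^2+y^2)) : ℝ) : ℂ)
        - Complex.I * ((exp (-t^2) * (y/((x-t)^2+y^2)) : ℝ) : ℂ)
    from funext fun t => integrand_decomp x y t hy]
  have h1 : Integrable (fun t : ℝ => ((exp (-t^2) * ((x-t)/((x-t)^2+y^2)) : ℝ) : ℂ)) :=
    (int_p x hy).ofReal
  have h2 : Integrable (fun t : ℝ =>
      Complex.I * ((exp (-t^2) * (y/((x-t)^2+y^2)) : ℝ) : ℂ)) :=
    ((int_q x hy).ofReal).const_mul _
  rw [integral_sub h1 h2, integral_const_mul]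
  congr 1
  · exact integral_ofReal
  · congr 1
    exact integral_ofReal

theorem complex_probability_tendsto_dawson' (x : ℝ) :
    Tendsto
      (fun y : ℝ => (Complex.I / (Real.pi : ℂ)) *
        ∫ t : ℝ, Complex.exp (-(t : ℂ) ^ 2) /
          (((x : ℂ) + Complex.I * (y : ℂ)) - (t : ℂ)))
      (nhdsWithin 0 (Set.Ioi 0))
      (nhds ((Real.exp (-x ^ 2) : ℂ) +
        (2 * Complex.I / (Real.sqrt Real.pi : ℂ)) * ((Real.exp (-x ^ 2) * ∫ t in (0:ℝ)..x, Real.exp (t ^ 2) : ℝ) : ℂ))) := by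
  have hA := A_tendsto x
  have hB := B_tendsto x
  have hcomb : Tendsto (fun y : ℝ => (Complex.I / (π:ℂ)) *
      (((2 * ∫ u in Ioi (0:ℝ), exp (-x^2) * (exp (-u^2) * Real.sinh (2*x*u)) * (u/(u^2+y^2)) : ℝ) : ℂ)
        - Complex.I * ((∫ s : ℝ, exp (-(x + y*s)^2) * (1+s^2)⁻¹ : ℝ) : ℂ)))
      (nhdsWithin 0 (Set.Ioi 0))
      (nhds ((Complex.I / (π:ℂ)) *
        (((2 * (exp (-x^2) * (Real.sqrt π * ∫ s in (0:ℝ)..x, exp (s^2))) : ℝ) : ℂ)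
          - Complex.I * ((π * exp (-x^2) : ℝ) : ℂ)))) := by
    apply Tendsto.const_mul
    apply Tendsto.sub
    · exact (Complex.continuous_ofReal.tendsto _).comp (hA.const_mul 2)
    · exact ((Complex.continuous_ofReal.tendsto _).comp hB).const_mul Complex.I
  have heq : (fun y : ℝ => (Complex.I / (π:ℂ)) *
      (((2 * ∫ u in Ioi (0:ℝ), exp (-x^2) * (exp (-u^2) * Real.sinh (2*x*u)) * (u/(u^2+y^2)) : ℝ) : ℂ)
        - Complex.I * ((∫ s : ℝ, exp (-(x + y*s)^2) * (1+s^2)⁻¹ : ℝ) : ℂ)))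
      =ᶠ[nhdsWithin (0:ℝ) (Set.Ioi 0)]
      (fun y : ℝ => (Complex.I / (Real.pi : ℂ)) *
        ∫ t : ℝ, Complex.exp (-(t : ℂ) ^ 2) /
          (((x : ℂ) + Complex.I * (y : ℂ)) - (t : ℂ))) := by
    filter_upwards [self_mem_nhdsWithin] with y hy
    have hy : (0:ℝ) < y := hy
    rw [integral_decomp x hy, ← A_eq x hy, ← B_eq x hy]
  have hfinal := hcomb.congr' heq
  have hlim : (Complex.I / (π:ℂ)) *
        (((2 * (exp (-x^2) * (Real.sqrt π * ∫ s in (0:ℝ)..x, exp (s^2))) : ℝ) : ℂ)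
          - Complex.I * ((π * exp (-x^2) : ℝ) : ℂ))
      = (Real.exp (-x ^ 2) : ℂ) +
        (2 * Complex.I / (Real.sqrt Real.pi : ℂ)) * ((Real.exp (-x ^ 2) * ∫ t in (0:ℝ)..x, Real.exp (t ^ 2) : ℝ) : ℂ) := by
    have hπ : (π:ℂ) ≠ 0 := Complex.ofReal_ne_zero.2 pi_ne_zero
    have hs : ((Real.sqrt π : ℝ) : ℂ) ≠ 0 :=
      Complex.ofReal_ne_zero.2 (Real.sqrt_ne_zero'.2 pi_pos)
    have hss : ((Real.sqrt π : ℝ) : ℂ)^2 = (π:ℂ) := by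
      rw [← Complex.ofReal_pow, Real.sq_sqrt pi_pos.le]
    push_cast
    field_simp
    linear_combination (2*Complex.I *
        ((∫ (s : ℝ) in (0:ℝ)..x, exp (s ^ 2) : ℝ):ℂ)) * hss
      - ((π:ℂ) * ((Real.sqrt π : ℝ):ℂ)) * Complex.I_sq
  rwa [hlim] at hfinal

end Aux

/-- For every real `x`, the complex probability function
`W(x,y) = (i/π) ∫_{−∞}^{∞} e^{−t²}/((x + iy) − t) dt` tends, as `y → 0⁺`, to
`e^{−x²} + (2i/√π)·daw(x)`. -/
theorem complex_probability_tendsto_dawson (x : ℝ) :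
    Tendsto
      (fun y : ℝ => (Complex.I / (Real.pi : ℂ)) *
        ∫ t : ℝ, Complex.exp (-(t : ℂ) ^ 2) /
          (((x : ℂ) + Complex.I * (y : ℂ)) - (t : ℂ)))
      (nhdsWithin 0 (Set.Ioi 0))
      (nhds ((Real.exp (-x ^ 2) : ℂ) +
        (2 * Complex.I / (Real.sqrt Real.pi : ℂ)) * (dawson x : ℂ))) := by
  have hd : dawson x = Real.exp (-x ^ 2) * ∫ t in (0:ℝ)..x, Real.exp (t ^ 2) := rfl
  rw [hd]
  exact complex_probability_tendsto_dawson' x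
end

section
/- For every complex z, the Fresnel integral satisfies F_r(z) := ∫₀^z e^{i(π/2)t²} dt = (1 + i)[1 − e^{i(π/2)z²} w(√π (1 + i) z / 2)] / 2, where w is the complex error function. -/
open Real MeasureTheory

set_option maxHeartbeats 1000000 in
/-- For every complex `z`, the Fresnel integral
`F_r(z) := ∫₀^z e^{i(π/2)t²} dt` (along the straight-line segment from `0` to `z`)
satisfies `F_r(z) = (1 + i)[1 − e^{i(π/2)z²} w(√π (1 + i) z / 2)] / 2`. -/
theorem fresnel_eq_faddeeva (z : ℂ) :
    (z * ∫ s in (0:ℝ)..1,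
        Complex.exp (Complex.I * (Real.pi / 2 : ℝ) * ((s : ℂ) * z) ^ 2)) =
      (1 + Complex.I) *
        (1 - Complex.exp (Complex.I * (Real.pi / 2 : ℝ) * z ^ 2) *
          faddeeva ((Real.sqrt Real.pi : ℂ) * (1 + Complex.I) * z / 2)) / 2 := by
  have hπ : ((Real.sqrt Real.pi : ℝ) : ℂ) ^ 2 = (Real.pi : ℂ) := by
    norm_cast
    exact Real.sq_sqrt Real.pi_pos.le
  have hsπ : ((Real.sqrt Real.pi : ℝ) : ℂ) ≠ 0 := by
    intro h
    rw [h] at hπ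
    simpa [Real.pi_ne_zero] using hπ.symm
  set a : ℂ := (Real.sqrt Real.pi : ℂ) * (1 + Complex.I) * z / 2 with ha
  have ha2 : a ^ 2 = Complex.I * ((Real.pi / 2 : ℝ) : ℂ) * z ^ 2 := by
    rw [ha]
    push_cast
    rw [← hπ]
    ring_nf
    rw [Complex.I_sq]
    ring
  have hint : ∀ s : ℝ,
      Complex.exp (Complex.I * (Real.pi / 2 : ℝ) * ((s : ℂ) * z) ^ 2) =
      Complex.exp (((s : ℂ) * a) ^ 2) := by
    intro s
    congr 1
    rw [mul_pow, mul_pow, ha2]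
    ring
  simp only [hint]
  rw [faddeeva]
  have hexp : Complex.exp (Complex.I * (Real.pi / 2 : ℝ) * z ^ 2) *
      Complex.exp (-a ^ 2) = 1 := by
    rw [← Complex.exp_add, ha2]
    simp
  set J : ℂ := ∫ s in (0:ℝ)..1, Complex.exp (((s : ℂ) * a) ^ 2) with hJ
  have key : Complex.exp (Complex.I * (Real.pi / 2 : ℝ) * z ^ 2) *
      (Complex.exp (-a ^ 2) * (1 + 2 * Complex.I / (Real.sqrt Real.pi : ℂ) * (a * J))) =
      1 + 2 * Complex.I / (Real.sqrt Real.pi : ℂ) * (a * J) := by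
    rw [← mul_assoc, hexp, one_mul]
  rw [key, ha]
  field_simp
  ring_nf
  linear_combination z * J * (2 + Complex.I) * Complex.I_sq
end

section
/- Let h > 0, σ > 0 and N be a positive integer, and let z = x + iy with x real and y ≥ 0. Set A_n = 8πh²n e^{σ² − (2πhn)²} sin(4πhnσ), B_n = 4h e^{σ² − (2πhn)²} cos(4πhnσ), and C_n = 2πhn for n = 1,…,N. Then (1/√π) ∫₀^{∞} 2√π h e^{σ²} [1 + 2 Σ_{n=1}^{N} e^{−(2πhn)²} cos(2πhn(t − 2σ))] e^{−(y+σ)t} e^{ixt} dt = i·2h e^{σ²}/(z + iσ) + Σ_{n=1}^{N} (A_n − i(z + iσ)B_n)/(C_n² − (z + iσ)²). -/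
open Real MeasureTheory Finset

lemma cexp_integrableOn (c : ℂ) (hc : c.re < 0) :
    IntegrableOn (fun t : ℝ => Complex.exp (c * t)) (Set.Ioi 0) := by
  have h0 : (0:ℝ) < -c.re := by linarith
  apply Integrable.mono' (exp_neg_integrableOn_Ioi 0 h0)
  · exact (Complex.continuous_exp.comp
      (continuous_const.mul Complex.continuous_ofReal)).aestronglyMeasurable
  · refine Filter.Eventually.of_forall fun t => le_of_eq ?_
    rw [Complex.norm_exp]
    congr 1
    simp [Complex.mul_re]

lemma cexp_integral (c : ℂ) (hc : c.re < 0) :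
    ∫ t in Set.Ioi (0:ℝ), Complex.exp (c * t) = -1 / c := by
  have hc0 : c ≠ 0 := fun hc' => by simp [hc'] at hc
  have hder : ∀ t ∈ Set.Ici (0:ℝ),
      HasDerivAt (fun t : ℝ => Complex.exp (c * t) / c) (Complex.exp (c * t)) t := by
    intro t _
    have h2 : HasDerivAt (fun w : ℂ => Complex.exp (c * w)) (Complex.exp (c * t) * c) (t : ℂ) := by
      simpa [mul_comm, Function.comp_def] using
        (Complex.hasDerivAt_exp (c * t)).comp (t : ℂ) ((hasDerivAt_id (t : ℂ)).const_mul c)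
    have h1 : HasDerivAt (fun w : ℂ => Complex.exp (c * w) / c) (Complex.exp (c * t)) (t : ℂ) := by
      simpa [mul_div_cancel_right₀ _ hc0] using h2.div_const c
    exact h1.comp_ofReal
  have htend : Filter.Tendsto (fun t : ℝ => Complex.exp (c * t) / c)
      Filter.atTop (nhds 0) := by
    rw [tendsto_zero_iff_norm_tendsto_zero]
    have heq : (fun t : ℝ => ‖Complex.exp (c * t) / c‖)
        = fun t : ℝ => Real.exp (-(-c.re * t)) / ‖c‖ := by
      ext t
      rw [norm_div, Complex.norm_exp]
      congr 2
      simp [Complex.mul_re]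
    rw [heq]
    have h0' : (0:ℝ) < -c.re := by linarith
    have hT : Filter.Tendsto (fun t : ℝ => -c.re * t) Filter.atTop Filter.atTop :=
      Filter.Tendsto.const_mul_atTop h0' Filter.tendsto_id
    simpa using (Real.tendsto_exp_neg_atTop_nhds_zero.comp hT).div_const ‖c‖
  have := integral_Ioi_of_hasDerivAt_of_tendsto' hder (cexp_integrableOn c hc) htend
  rw [this]
  simp [neg_div]

lemma term_eq (c : ℂ) (a θ k : ℝ) (h1 : c + a * Complex.I ≠ 0) (h2 : c - a * Complex.I ≠ 0) :
    (k : ℂ) * Complex.exp ((-θ : ℝ) * Complex.I) * (-1 / (c + a * Complex.I)) +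
      (k : ℂ) * Complex.exp ((θ : ℝ) * Complex.I) * (-1 / (c - a * Complex.I)) =
    (((2*k*a*Real.sin θ : ℝ) : ℂ) - c * ((2*k*Real.cos θ : ℝ) : ℂ)) /
      ((c + a * Complex.I) * (c - a * Complex.I)) := by
  rw [Complex.exp_mul_I, Complex.exp_mul_I]
  push_cast
  rw [Complex.cos_neg, Complex.sin_neg]
  rw [eq_div_iff (mul_ne_zero h1 h2)]
  linear_combination (-(k:ℂ) * (Complex.cos θ - Complex.sin θ * Complex.I) * (c - a * Complex.I)) * mul_inv_cancel₀ h1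
    + (-(k:ℂ) * (Complex.cos θ + Complex.sin θ * Complex.I) * (c + a * Complex.I)) * mul_inv_cancel₀ h2
    + (-2 * (k:ℂ) * a * Complex.sin θ) * Complex.I_sq



/-- With `h > 0`, `σ > 0`, a positive integer `N`, `z = x + iy` (`y ≥ 0`), and
coefficients `A_n = 8πh²n e^{σ² − (2πhn)²} sin(4πhnσ)`,
`B_n = 4h e^{σ² − (2πhn)²} cos(4πhnσ)`, `C_n = 2πhn`, one has
`(1/√π) ∫₀^{∞} 2√π h e^{σ²} [1 + 2 Σ_{n=1}^{N} e^{−(2πhn)²} cos(2πhn(t − 2σ))]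
 e^{−(y+σ)t} e^{ixt} dt
 = i·2h e^{σ²}/(z + iσ) + Σ_{n=1}^{N} (A_n − i(z + iσ)B_n)/(C_n² − (z + iσ)²)`. -/
theorem rational_approximation_integral
    (h σ : ℝ) (hh : 0 < h) (hσ : 0 < σ) (N : ℕ) (hN : 0 < N)
    (x y : ℝ) (hy : 0 ≤ y) (z : ℂ) (hz : z = (x : ℂ) + Complex.I * (y : ℂ))
    (A B C : ℕ → ℝ)
    (hA : ∀ n : ℕ, A n = 8 * Real.pi * h ^ 2 * n *
      Real.exp (σ ^ 2 - (2 * Real.pi * h * n) ^ 2) *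
      Real.sin (4 * Real.pi * h * n * σ))
    (hB : ∀ n : ℕ, B n = 4 * h *
      Real.exp (σ ^ 2 - (2 * Real.pi * h * n) ^ 2) *
      Real.cos (4 * Real.pi * h * n * σ))
    (hC : ∀ n : ℕ, C n = 2 * Real.pi * h * n) :
    (1 / (Real.sqrt Real.pi : ℂ)) *
        ∫ t in Set.Ioi (0:ℝ),
          ((2 * Real.sqrt Real.pi * h * Real.exp (σ ^ 2) : ℝ) : ℂ) *
            ((1 + 2 * ∑ n ∈ Finset.Icc 1 N,
              Real.exp (-(2 * Real.pi * h * n) ^ 2) *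
                Real.cos (2 * Real.pi * h * n * (t - 2 * σ)) : ℝ) : ℂ) *
            Complex.exp (-((y + σ : ℝ) : ℂ) * (t : ℂ)) *
            Complex.exp (Complex.I * (x : ℂ) * (t : ℂ)) =
      Complex.I * ((2 * h * Real.exp (σ ^ 2) : ℝ) : ℂ) /
          (z + Complex.I * (σ : ℂ)) +
        ∑ n ∈ Finset.Icc 1 N,
          ((A n : ℂ) - Complex.I * (z + Complex.I * (σ : ℂ)) * (B n : ℂ)) /
            ((C n : ℂ) ^ 2 - (z + Complex.I * (σ : ℂ)) ^ 2) := by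
  
  set w : ℂ := z + Complex.I * (σ : ℂ) with hw
  set c : ℂ := Complex.I * w with hcdef
  have hwim : w.im = y + σ := by
    rw [hw, hz]; simp
  have hcre : c.re = -(y + σ) := by
    rw [hcdef]; simp [hwim]
  have hcre0 : c.re < 0 := by rw [hcre]; linarith
  have hradd : ∀ r : ℝ, (c + (r : ℂ) * Complex.I).re < 0 := by
    intro r; simpa [hcre] using hcre0
  have hrsub : ∀ r : ℝ, (c - (r : ℂ) * Complex.I).re < 0 := by
    intro r; simpa [hcre] using hcre0
  have hc0 : c ≠ 0 := fun hc' => by simp [hc'] at hcre0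
  have hw0 : w ≠ 0 := fun hw' => by
    have := hwim; rw [hw'] at this; simp at this; linarith
  have hπ0 : (Real.sqrt Real.pi : ℂ) ≠ 0 := by
    exact_mod_cast (Real.sqrt_pos.mpr Real.pi_pos).ne'
  -- combined exponential
  have hct : ∀ t : ℝ, Complex.exp (-((y + σ : ℝ) : ℂ) * (t : ℂ)) *
      Complex.exp (Complex.I * (x : ℂ) * (t : ℂ)) = Complex.exp (c * t) := by
    intro t
    rw [← Complex.exp_add]
    congr 1
    rw [hcdef, hw, hz]
    push_cast
    linear_combination (-((y : ℂ) + σ) * t) * Complex.I_sq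
  -- pointwise identity for the integrand
  have key : ∀ t : ℝ,
      (1 / (Real.sqrt Real.pi : ℂ)) *
        (((2 * Real.sqrt Real.pi * h * Real.exp (σ ^ 2) : ℝ) : ℂ) *
          ((1 + 2 * ∑ n ∈ Finset.Icc 1 N,
            Real.exp (-(2 * Real.pi * h * n) ^ 2) *
              Real.cos (2 * Real.pi * h * n * (t - 2 * σ)) : ℝ) : ℂ) *
          Complex.exp (-((y + σ : ℝ) : ℂ) * (t : ℂ)) *
          Complex.exp (Complex.I * (x : ℂ) * (t : ℂ)))
      = ((2 * h * Real.exp (σ ^ 2) : ℝ) : ℂ) * Complex.exp (c * t)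
        + ∑ n ∈ Finset.Icc 1 N,
          (((2 * h * Real.exp (σ ^ 2 - (2 * Real.pi * h * n) ^ 2) : ℝ) : ℂ) *
              Complex.exp ((-(4 * Real.pi * h * n * σ) : ℝ) * Complex.I) *
              Complex.exp ((c + ((2 * Real.pi * h * n : ℝ) : ℂ) * Complex.I) * t)
            + ((2 * h * Real.exp (σ ^ 2 - (2 * Real.pi * h * n) ^ 2) : ℝ) : ℂ) *
              Complex.exp (((4 * Real.pi * h * n * σ) : ℝ) * Complex.I) *
              Complex.exp ((c - ((2 * Real.pi * h * n : ℝ) : ℂ) * Complex.I) * t)) := by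
    intro t
    rw [mul_assoc _ (Complex.exp _) (Complex.exp _), hct t]
    have expand : ∀ S : ℝ,
        1 / (Real.sqrt Real.pi : ℂ) *
          (((2 * Real.sqrt Real.pi * h * Real.exp (σ ^ 2) : ℝ) : ℂ) *
            ((1 + 2 * S : ℝ) : ℂ) * Complex.exp (c * t))
        = ((2 * h * Real.exp (σ ^ 2) : ℝ) : ℂ) * Complex.exp (c * t)
          + ((4 * h * Real.exp (σ ^ 2) : ℝ) : ℂ) * Complex.exp (c * t) * S := by
      intro S
      have hsp : ((2 * Real.sqrt Real.pi * h * Real.exp (σ ^ 2) : ℝ) : ℂ)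
          = (Real.sqrt Real.pi : ℂ) * ((2 * h * Real.exp (σ ^ 2) : ℝ) : ℂ) := by
        push_cast; ring
      rw [hsp]
      field_simp
      push_cast
      ring
    rw [expand]
    congr 1
    push_cast [Finset.mul_sum]
    refine Finset.sum_congr rfl fun n hn => ?_
    have h1 : Complex.exp ((σ:ℂ)^2 - (2*(π:ℂ)*(h:ℂ)*(n:ℂ))^2)
        = Complex.exp ((σ:ℂ)^2) * Complex.exp (-(2*(π:ℂ)*(h:ℂ)*(n:ℂ))^2) := by
      rw [← Complex.exp_add, sub_eq_add_neg]
    have h2 : Complex.exp ((c + 2*(π:ℂ)*(h:ℂ)*(n:ℂ)*Complex.I) * (t:ℂ))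
        = Complex.exp (c*(t:ℂ)) * Complex.exp ((2*(π:ℂ)*(h:ℂ)*(n:ℂ)*(t:ℂ))*Complex.I) := by
      rw [← Complex.exp_add]; congr 1; ring
    have h3 : Complex.exp ((c - 2*(π:ℂ)*(h:ℂ)*(n:ℂ)*Complex.I) * (t:ℂ))
        = Complex.exp (c*(t:ℂ)) * Complex.exp (-(2*(π:ℂ)*(h:ℂ)*(n:ℂ)*(t:ℂ))*Complex.I) := by
      rw [← Complex.exp_add]; congr 1; ring
    have hx1 : Complex.exp ((2*(π:ℂ)*(h:ℂ)*(n:ℂ)*((t:ℂ)-2*(σ:ℂ)))*Complex.I)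
        = Complex.exp ((2*(π:ℂ)*(h:ℂ)*(n:ℂ)*(t:ℂ))*Complex.I) *
          Complex.exp (-(4*(π:ℂ)*(h:ℂ)*(n:ℂ)*(σ:ℂ))*Complex.I) := by
      rw [← Complex.exp_add]; congr 1; ring
    have hx2 : Complex.exp (-(2*(π:ℂ)*(h:ℂ)*(n:ℂ)*((t:ℂ)-2*(σ:ℂ)))*Complex.I)
        = Complex.exp (-(2*(π:ℂ)*(h:ℂ)*(n:ℂ)*(t:ℂ))*Complex.I) *
          Complex.exp ((4*(π:ℂ)*(h:ℂ)*(n:ℂ)*(σ:ℂ))*Complex.I) := by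
      rw [← Complex.exp_add]; congr 1; ring
    have hcos : Complex.cos (2*(π:ℂ)*(h:ℂ)*(n:ℂ)*((t:ℂ)-2*(σ:ℂ)))
        = (Complex.exp ((2*(π:ℂ)*(h:ℂ)*(n:ℂ)*(t:ℂ))*Complex.I) *
            Complex.exp (-(4*(π:ℂ)*(h:ℂ)*(n:ℂ)*(σ:ℂ))*Complex.I) +
          Complex.exp (-(2*(π:ℂ)*(h:ℂ)*(n:ℂ)*(t:ℂ))*Complex.I) *
            Complex.exp ((4*(π:ℂ)*(h:ℂ)*(n:ℂ)*(σ:ℂ))*Complex.I)) / 2 := by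
      rw [eq_div_iff (two_ne_zero (α := ℂ)), mul_comm, Complex.two_cos, hx1, hx2]
    rw [h1, h2, h3, hcos]
    ring

  have intn : ∀ n : ℕ, IntegrableOn (fun t : ℝ =>
      ((2 * h * Real.exp (σ ^ 2 - (2 * Real.pi * h * n) ^ 2) : ℝ) : ℂ) *
        Complex.exp ((-(4 * Real.pi * h * n * σ) : ℝ) * Complex.I) *
        Complex.exp ((c + ((2 * Real.pi * h * n : ℝ) : ℂ) * Complex.I) * t)
      + ((2 * h * Real.exp (σ ^ 2 - (2 * Real.pi * h * n) ^ 2) : ℝ) : ℂ) *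
        Complex.exp (((4 * Real.pi * h * n * σ) : ℝ) * Complex.I) *
        Complex.exp ((c - ((2 * Real.pi * h * n : ℝ) : ℂ) * Complex.I) * t)) (Set.Ioi 0) := by
    intro n
    exact ((cexp_integrableOn _ (hradd _)).const_mul _).add
      ((cexp_integrableOn _ (hrsub _)).const_mul _)
  rw [← MeasureTheory.integral_const_mul]
  rw [MeasureTheory.setIntegral_congr_fun measurableSet_Ioi fun t _ => key t]
  rw [MeasureTheory.integral_add ((cexp_integrableOn c hcre0).const_mul _)
    (integrable_finset_sum _ fun n _ => intn n)]
  rw [MeasureTheory.integral_finset_sum _ fun n _ => intn n]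
  rw [MeasureTheory.integral_const_mul, cexp_integral c hcre0]
  congr 1
  · -- first term
    rw [hcdef]
    have hIw : Complex.I * w ≠ 0 := by rw [← hcdef]; exact hc0
    field_simp
    ring_nf
    simp only [Complex.I_sq, Complex.I_pow_four,
      show Complex.I ^ 3 = -Complex.I by rw [pow_succ, Complex.I_sq]; ring]
    ring
  · refine Finset.sum_congr rfl fun n hn => ?_
    rw [MeasureTheory.integral_add ((cexp_integrableOn _ (hradd _)).const_mul _)
      ((cexp_integrableOn _ (hrsub _)).const_mul _),
      MeasureTheory.integral_const_mul, MeasureTheory.integral_const_mul,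
      cexp_integral _ (hradd (2 * Real.pi * h * n)), cexp_integral _ (hrsub (2 * Real.pi * h * n))]
    have hne1 : c + ((2 * Real.pi * h * n : ℝ) : ℂ) * Complex.I ≠ 0 := by
      intro h0; have := hradd (2 * Real.pi * h * n); rw [h0] at this; simp at this
    have hne2 : c - ((2 * Real.pi * h * n : ℝ) : ℂ) * Complex.I ≠ 0 := by
      intro h0; have := hrsub (2 * Real.pi * h * n); rw [h0] at this; simp at this
    rw [term_eq c (2 * Real.pi * h * n) (4 * Real.pi * h * n * σ)
      (2 * h * Real.exp (σ ^ 2 - (2 * Real.pi * h * n) ^ 2)) hne1 hne2]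
    have hnum1 : ((2 * (2 * h * Real.exp (σ ^ 2 - (2 * Real.pi * h * n) ^ 2)) *
        (2 * Real.pi * h * n) * Real.sin (4 * Real.pi * h * n * σ) : ℝ) : ℂ) = ((A n : ℝ) : ℂ) := by
      norm_cast
      rw [hA]
      ring
    have hnum2 : ((2 * (2 * h * Real.exp (σ ^ 2 - (2 * Real.pi * h * n) ^ 2)) *
        Real.cos (4 * Real.pi * h * n * σ) : ℝ) : ℂ) = ((B n : ℝ) : ℂ) := by
      norm_cast
      rw [hB]
      ring
    have hden : (c + ((2 * Real.pi * h * n : ℝ) : ℂ) * Complex.I) *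
        (c - ((2 * Real.pi * h * n : ℝ) : ℂ) * Complex.I)
        = ((C n : ℝ) : ℂ) ^ 2 - w ^ 2 := by
      rw [hC]
      push_cast
      linear_combination ((w ^ 2 - (2 * (Real.pi : ℂ) * h * n) ^ 2)) * Complex.I_sq
        + (c + Complex.I * w) * hcdef
    rw [hnum1, hnum2, hden]
end
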